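/- arXiv:1610.00425 — 6 statements merged into one kernel-verified Lean document; each statement's English description precedes it below -/
import Mathlib

section
/- A point (s₁,s₂,p) ∈ ℂ³ belongs to Γ₃ if and only if |p| ≤ 1 and there exists (c₁,c₂) ∈ Γ₂ such that s₁ = c₁ + conj(c₂)·p and s₂ = c₂ + conj(c₁)·p. -/
noncomputable section

/-- The closed symmetrized tridisc. -/
def Gamma3 : Set (ℂ × ℂ × ℂ) :=
  {s | ∃ z1 z2 z3 : ℂ, ‖z1‖ ≤ 1 ∧ ‖z2‖ ≤ 1 ∧ ‖z3‖ ≤ 1 ∧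
    s = (z1 + z2 + z3, z1 * z2 + z2 * z3 + z3 * z1, z1 * z2 * z3)}

/-- The closed symmetrized bidisc. -/
def Gamma2 : Set (ℂ × ℂ) :=
  {s | ∃ z1 z2 : ℂ, ‖z1‖ ≤ 1 ∧ ‖z2‖ ≤ 1 ∧ s = (z1 + z2, z1 * z2)}

variable {H : Type*} [NormedAddCommGroup H] [InnerProductSpace ℂ H] [CompleteSpace H]

/-- Evaluation of a polynomial in three variables on a triple of operators. -/
def opEval3 (S1 S2 P : H →L[ℂ] H) (q : MvPolynomial (Fin 3) ℂ) : H →L[ℂ] H :=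
  (AddMonoidAlgebra.coeff q).sum fun m c => c • (S1 ^ m 0 * S2 ^ m 1 * P ^ m 2)

/-- Evaluation of a polynomial in two variables on a pair of operators. -/
def opEval2 (S P : H →L[ℂ] H) (q : MvPolynomial (Fin 2) ℂ) : H →L[ℂ] H :=
  (AddMonoidAlgebra.coeff q).sum fun m c => c • (S ^ m 0 * P ^ m 1)

def IsGamma3Contraction (S1 S2 P : H →L[ℂ] H) : Prop :=
  Commute S1 S2 ∧ Commute S1 P ∧ Commute S2 P ∧
  ∀ q : MvPolynomial (Fin 3) ℂ,
    ‖opEval3 S1 S2 P q‖ ≤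
      ⨆ w ∈ Gamma3, ‖MvPolynomial.eval ![w.1, w.2.1, w.2.2] q‖

/-- `Γ₂` is a spectral set for the commuting pair `(S, P)`. -/
def IsGamma2Contraction (S P : H →L[ℂ] H) : Prop :=
  Commute S P ∧
  ∀ q : MvPolynomial (Fin 2) ℂ,
    ‖opEval2 S P q‖ ≤ ⨆ w ∈ Gamma2, ‖MvPolynomial.eval ![w.1, w.2] q‖

/-- The defect operator `D_P = (I - P*P)^(1/2)` of a contraction `P`. -/
def defectOp (P : H →L[ℂ] H) : H →L[ℂ] H := CFC.sqrt (1 - star P * P)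

/-- The defect space `𝒟_P`, the closure of the range of `D_P`. -/
def defectSpace (P : H →L[ℂ] H) : Submodule ℂ H :=
  (LinearMap.range (defectOp P : H →ₗ[ℂ] H)).topologicalClosure

/-- The numerical radius of a bounded operator. -/
def numRadius (A : H →L[ℂ] H) : ℝ :=
  ⨆ x : {x : H // ‖x‖ = 1}, ‖(inner ℂ (A x.1) x.1 : ℂ)‖

/-- A pair of operators is almost normal if they commute and have equal self-commutators. -/
def AlmostNormal (T1 T2 : H →L[ℂ] H) : Prop :=
  Commute T1 T2 ∧ star T1 * T1 - T1 * star T1 = star T2 * T2 - T2 * star T2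

/-- A `Γ₃`-isometry: a `Γ₃`-contraction whose last entry is an isometry. -/
def IsGamma3Isometry (T1 T2 V : H →L[ℂ] H) : Prop :=
  IsGamma3Contraction T1 T2 V ∧ ∀ x, ‖V x‖ = ‖x‖

/-- A `Γ₃`-isometric dilation of `(S1, S2, P)`, with `ι` the inclusion of `H` into the
dilation space `K`. -/
def IsGamma3IsometricDilation {K : Type*} [NormedAddCommGroup K] [InnerProductSpace ℂ K]
    [CompleteSpace K] (S1 S2 P : H →L[ℂ] H) (T1 T2 V : K →L[ℂ] K) (ι : H →ₗᵢ[ℂ] K) : Prop :=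
  IsGamma3Isometry T1 T2 V ∧
  ∀ m1 m2 n : ℕ,
    ContinuousLinearMap.adjoint ι.toContinuousLinearMap ∘L
      ((T1 ^ m1 * T2 ^ m2 * V ^ n) ∘L ι.toContinuousLinearMap) = S1 ^ m1 * S2 ^ m2 * P ^ n

end


section GammaHelpers

private lemma key_norm' (w z : ℂ) (hw : ‖w‖ ≤ 1) (hz : 1 ≤ ‖z‖) :
    ‖(starRingEnd ℂ) w * z - 1‖ ≤ ‖z - w‖ := by
  have hw2 : Complex.normSq w ≤ 1 := by
    rw [← Complex.sq_norm]
    nlinarith [norm_nonneg w, hw]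
  have hz2 : 1 ≤ Complex.normSq z := by
    rw [← Complex.sq_norm]
    nlinarith [hz]
  have hkey : Complex.normSq (z - w) - Complex.normSq ((starRingEnd ℂ) w * z - 1)
      = (Complex.normSq z - 1) * (1 - Complex.normSq w) := by
    simp only [Complex.normSq_apply, Complex.sub_re, Complex.sub_im, Complex.mul_re,
      Complex.mul_im, Complex.conj_re, Complex.conj_im, Complex.one_re, Complex.one_im]
    ring
  have h : Complex.normSq ((starRingEnd ℂ) w * z - 1) ≤ Complex.normSq (z - w) := by nlinarith
  rw [Complex.norm_def, Complex.norm_def]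
  exact Real.sqrt_le_sqrt h

private lemma quad_roots' (c1 c2 : ℂ) (h : ∀ z : ℂ, 1 < ‖z‖ → z^2 - c1*z + c2 ≠ 0) :
    ∃ w1 w2 : ℂ, ‖w1‖ ≤ 1 ∧ ‖w2‖ ≤ 1 ∧ c1 = w1 + w2 ∧ c2 = w1 * w2 := by
  obtain ⟨d, hd⟩ := IsAlgClosed.exists_pow_nat_eq (k := ℂ) (c1^2 - 4*c2) (n := 2) (by norm_num)
  refine ⟨(c1+d)/2, (c1-d)/2, ?_, ?_, by ring, by linear_combination (1/4 : ℂ) * hd⟩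
  · by_contra hc
    exact h _ (lt_of_not_ge hc) (by linear_combination (1/4 : ℂ) * hd)
  · by_contra hc
    exact h _ (lt_of_not_ge hc) (by linear_combination (1/4 : ℂ) * hd)

private lemma cubic_roots' (s1 s2 p : ℂ)
    (h : ∀ z : ℂ, 1 < ‖z‖ → z^3 - s1*z^2 + s2*z - p ≠ 0) :
    ∃ z1 z2 z3 : ℂ, ‖z1‖ ≤ 1 ∧ ‖z2‖ ≤ 1 ∧ ‖z3‖ ≤ 1 ∧
      s1 = z1 + z2 + z3 ∧ s2 = z1*z2 + z2*z3 + z3*z1 ∧ p = z1*z2*z3 := by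
  obtain ⟨z1, hz1⟩ := IsAlgClosed.exists_root
    (p := Polynomial.X^3 - Polynomial.C s1 * Polynomial.X^2 + Polynomial.C s2 * Polynomial.X
      - Polynomial.C p) (by
        have : (Polynomial.X^3 - Polynomial.C s1 * Polynomial.X^2 + Polynomial.C s2 * Polynomial.X
          - Polynomial.C p).degree = 3 := by compute_degree!
        simp [this])
  have hroot : z1^3 - s1*z1^2 + s2*z1 - p = 0 := by
    simpa [Polynomial.IsRoot, sub_eq_zero] using hz1
  have hb1 : ‖z1‖ ≤ 1 := by
    by_contra hc
    exact h z1 (lt_of_not_ge hc) hroot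
  obtain ⟨z2, z3, hb2, hb3, hsum, hprod⟩ := quad_roots' (s1 - z1) (s2 - (s1 - z1)*z1) (by
    intro z hz hq
    exact h z hz (by linear_combination (z - z1) * hq + hroot))
  exact ⟨z1, z2, z3, hb1, hb2, hb3, by linear_combination hsum,
    by linear_combination z1 * hsum + hprod, by linear_combination z1*hprod - hroot⟩

private lemma gamma2_branch_lt (z1 z2 z3 : ℂ) (h1 : ‖z1‖ ≤ 1) (h2 : ‖z2‖ ≤ 1) (h3 : ‖z3‖ ≤ 1)
    (hp : ‖z1 * z2 * z3‖ < 1) :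
    ∃ c1 c2 : ℂ, (c1, c2) ∈ Gamma2 ∧
      z1 + z2 + z3 = c1 + (starRingEnd ℂ) c2 * (z1 * z2 * z3) ∧
      z1*z2 + z2*z3 + z3*z1 = c2 + (starRingEnd ℂ) c1 * (z1 * z2 * z3) := by
  have hp' : ‖z1‖ * ‖z2‖ * ‖z3‖ < 1 := by simpa [norm_mul] using hp
  have hns : Complex.normSq (z1*z2*z3) < 1 := by
    rw [← Complex.sq_norm]
    nlinarith [norm_nonneg (z1*z2*z3)]
  have hDval : ((starRingEnd ℂ) z1 * (starRingEnd ℂ) z2 * (starRingEnd ℂ) z3) * (z1*z2*z3)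
      = ((Complex.normSq (z1*z2*z3) : ℝ) : ℂ) := by
    rw [← map_mul, ← map_mul, mul_comm, Complex.mul_conj]
  have hD0 : (1 : ℂ) - ((starRingEnd ℂ) z1 * (starRingEnd ℂ) z2 * (starRingEnd ℂ) z3)
      * (z1*z2*z3) ≠ 0 := by
    rw [hDval]
    intro hcon
    rw [sub_eq_zero] at hcon
    have : (Complex.normSq (z1*z2*z3) : ℝ) = 1 := by exact_mod_cast hcon.symm
    linarith
  have hD0' : (1 : ℂ) - (z1*z2*z3) *
      ((starRingEnd ℂ) z1 * (starRingEnd ℂ) z2 * (starRingEnd ℂ) z3) ≠ 0 := by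
    rw [mul_comm (z1*z2*z3)]; exact hD0
  set q : ℂ →+* ℂ := (starRingEnd ℂ) with hq
  set D : ℂ := 1 - (q z1 * q z2 * q z3) * (z1*z2*z3) with hDdef
  set N1 : ℂ := (z1+z2+z3) - (q z1 * q z2 + q z2 * q z3 + q z3 * q z1) * (z1*z2*z3) with hN1
  set N2 : ℂ := (z1*z2+z2*z3+z3*z1) - (q z1 + q z2 + q z3) * (z1*z2*z3) with hN2
  refine ⟨N1 / D, N2 / D, ?_, ?_, ?_⟩
  · have hnr : ∀ z : ℂ, 1 < ‖z‖ → z^2 - (N1/D)*z + N2/D ≠ 0 := ?_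
    · obtain ⟨w1, w2, hw1, hw2, hcw1, hcw2⟩ := quad_roots' (N1/D) (N2/D) hnr
      exact ⟨w1, w2, hw1, hw2, by rw [hcw1, hcw2]⟩
    intro z hz heq
    have hc1 : N1/D * D = N1 := div_mul_cancel₀ _ hD0
    have hc2 : N2/D * D = N2 := div_mul_cancel₀ _ hD0
    have hfs : (z-z1)*(z-z2)*(z-z3)
        = (z1*z2*z3) * ((q z1*z-1)*((q z2*z-1)*(q z3*z-1))) := by
      linear_combination D*z*heq + z^2*hc1 - z*hc2 - z^3*hDdef + z^2*hN1 - z*hN2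
    have key1 := key_norm' z1 z h1 hz.le
    have key2 := key_norm' z2 z h2 hz.le
    have key3 := key_norm' z3 z h3 hz.le
    have ne1 : z ≠ z1 := fun h => by rw [h] at hz; exact absurd h1 (not_le.mpr hz)
    have ne2 : z ≠ z2 := fun h => by rw [h] at hz; exact absurd h2 (not_le.mpr hz)
    have ne3 : z ≠ z3 := fun h => by rw [h] at hz; exact absurd h3 (not_le.mpr hz)
    have pos1 : 0 < ‖z - z1‖ := norm_pos_iff.mpr (sub_ne_zero.mpr ne1)
    have pos2 : 0 < ‖z - z2‖ := norm_pos_iff.mpr (sub_ne_zero.mpr ne2)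
    have pos3 : 0 < ‖z - z3‖ := norm_pos_iff.mpr (sub_ne_zero.mpr ne3)
    have hn := congrArg norm hfs
    simp only [norm_mul] at hn
    have m1 : ‖q z1*z-1‖ * (‖q z2*z-1‖ * ‖q z3*z-1‖) ≤ ‖z-z1‖ * (‖z-z2‖ * ‖z-z3‖) :=
      mul_le_mul key1 (mul_le_mul key2 key3 (norm_nonneg _) pos2.le)
        (by positivity) pos1.le
    rw [mul_assoc] at hn
    have hB : 0 < ‖z - z1‖ * (‖z - z2‖ * ‖z - z3‖) := mul_pos pos1 (mul_pos pos2 pos3)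
    have hlt : ‖z - z1‖ * (‖z - z2‖ * ‖z - z3‖) < ‖z - z1‖ * (‖z - z2‖ * ‖z - z3‖) := by
      calc ‖z - z1‖ * (‖z - z2‖ * ‖z - z3‖)
          = ‖z1‖ * ‖z2‖ * ‖z3‖ * (‖q z1 * z - 1‖ * (‖q z2 * z - 1‖ * ‖q z3 * z - 1‖)) := hn
        _ ≤ ‖z1‖ * ‖z2‖ * ‖z3‖ * (‖z - z1‖ * (‖z - z2‖ * ‖z - z3‖)) :=
            mul_le_mul_of_nonneg_left m1 (by positivity)
        _ < 1 * (‖z - z1‖ * (‖z - z2‖ * ‖z - z3‖)) := mul_lt_mul_of_pos_right hp' hB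
        _ = _ := one_mul _
    exact lt_irrefl _ hlt
  · rw [hN1, hN2, hDdef]
    simp only [hq, map_div₀, map_sub, map_add, map_mul, map_one, Complex.conj_conj]
    have hA : (1 : ℂ) - (starRingEnd ℂ) z1 * (starRingEnd ℂ) z2 * (starRingEnd ℂ) z3
        * (z1*z2*z3) ≠ 0 := hD0
    have hB : (1 : ℂ) - (z1*z2*z3) *
        ((starRingEnd ℂ) z1 * (starRingEnd ℂ) z2 * (starRingEnd ℂ) z3) ≠ 0 := hD0'
    field_simp
    rw [eq_div_iff (by intro h; apply hB; linear_combination h)]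
    ring
  · rw [hN1, hN2, hDdef]
    simp only [hq, map_div₀, map_sub, map_add, map_mul, map_one, Complex.conj_conj]
    have hA : (1 : ℂ) - (starRingEnd ℂ) z1 * (starRingEnd ℂ) z2 * (starRingEnd ℂ) z3
        * (z1*z2*z3) ≠ 0 := hD0
    have hB : (1 : ℂ) - (z1*z2*z3) *
        ((starRingEnd ℂ) z1 * (starRingEnd ℂ) z2 * (starRingEnd ℂ) z3) ≠ 0 := hD0'
    field_simp
    rw [eq_div_iff (by intro h; apply hB; linear_combination h)]
    ring

private lemma gamma2_branch_eq (z1 z2 z3 : ℂ) (h1 : ‖z1‖ ≤ 1) (h2 : ‖z2‖ ≤ 1) (h3 : ‖z3‖ ≤ 1)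
    (hp : ‖z1 * z2 * z3‖ = 1) :
    ∃ c1 c2 : ℂ, (c1, c2) ∈ Gamma2 ∧
      z1 + z2 + z3 = c1 + (starRingEnd ℂ) c2 * (z1 * z2 * z3) ∧
      z1*z2 + z2*z3 + z3*z1 = c2 + (starRingEnd ℂ) c1 * (z1 * z2 * z3) := by
  have hp' : ‖z1‖ * ‖z2‖ * ‖z3‖ = 1 := by rw [← norm_mul, ← norm_mul]; exact hp
  have hbc : ‖z2‖ * ‖z3‖ ≤ 1 := mul_le_one₀ h2 (norm_nonneg _) h3
  have hac : ‖z1‖ * ‖z3‖ ≤ 1 := mul_le_one₀ h1 (norm_nonneg _) h3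
  have e1 : ‖z1‖ = 1 := by nlinarith [norm_nonneg z1, norm_nonneg z2, norm_nonneg z3]
  have e2 : ‖z2‖ = 1 := by nlinarith [norm_nonneg z1, norm_nonneg z2, norm_nonneg z3]
  have u1 : (starRingEnd ℂ) z1 * z1 = 1 := by
    rw [mul_comm, Complex.mul_conj]
    norm_cast
    rw [← Complex.sq_norm, e1, one_pow]
  have u2 : (starRingEnd ℂ) z2 * z2 = 1 := by
    rw [mul_comm, Complex.mul_conj]
    norm_cast
    rw [← Complex.sq_norm, e2, one_pow]
  refine ⟨z1 + z2, z1 * z2, ⟨z1, z2, h1, h2, rfl⟩, ?_, ?_⟩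
  · simp only [map_mul]
    linear_combination (-z3 * ((starRingEnd ℂ) z2 * z2)) * u1 - z3 * u2
  · simp only [map_add]
    linear_combination (-z2*z3) * u1 - z1*z3*u2

private lemma gamma3_noroot (s1 s2 p w1 w2 : ℂ) (hp : ‖p‖ ≤ 1)
    (hw1 : ‖w1‖ ≤ 1) (hw2 : ‖w2‖ ≤ 1)
    (he1 : s1 = (w1 + w2) + (starRingEnd ℂ) (w1 * w2) * p)
    (he2 : s2 = w1 * w2 + (starRingEnd ℂ) (w1 + w2) * p) :
    ∀ z : ℂ, 1 < ‖z‖ → z^3 - s1*z^2 + s2*z - p ≠ 0 := by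
  simp only [map_add, map_mul] at he1 he2
  intro z hz heq
  have hfact : (z-w1)*(z-w2)*z
      = p*(((starRingEnd ℂ) w1*z-1)*((starRingEnd ℂ) w2*z-1)) := by
    linear_combination heq + z^2*he1 - z*he2
  have key1 := key_norm' w1 z hw1 hz.le
  have key2 := key_norm' w2 z hw2 hz.le
  have ne1 : z ≠ w1 := fun h => by rw [h] at hz; exact absurd hw1 (not_le.mpr hz)
  have ne2 : z ≠ w2 := fun h => by rw [h] at hz; exact absurd hw2 (not_le.mpr hz)
  have pos1 : 0 < ‖z - w1‖ := norm_pos_iff.mpr (sub_ne_zero.mpr ne1)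
  have pos2 : 0 < ‖z - w2‖ := norm_pos_iff.mpr (sub_ne_zero.mpr ne2)
  have hn := congrArg norm hfact
  simp only [norm_mul] at hn
  have m1 : ‖(starRingEnd ℂ) w1*z-1‖ * ‖(starRingEnd ℂ) w2*z-1‖ ≤ ‖z-w1‖ * ‖z-w2‖ :=
    mul_le_mul key1 key2 (norm_nonneg _) pos1.le
  nlinarith [hn, m1, hp, hz, pos1, pos2, mul_pos pos1 pos2, norm_nonneg p,
    mul_nonneg (norm_nonneg ((starRingEnd ℂ) w1*z-1)) (norm_nonneg ((starRingEnd ℂ) w2*z-1))]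

end GammaHelpers

theorem mem_gamma3_iff_exists_gamma2 (s1 s2 p : ℂ) :
    (s1, s2, p) ∈ Gamma3 ↔
      ‖p‖ ≤ 1 ∧ ∃ c1 c2 : ℂ, (c1, c2) ∈ Gamma2 ∧
        s1 = c1 + (starRingEnd ℂ) c2 * p ∧ s2 = c2 + (starRingEnd ℂ) c1 * p := by
  constructor
  · rintro ⟨z1, z2, z3, h1, h2, h3, hs⟩
    rw [Prod.mk.injEq, Prod.mk.injEq] at hs
    obtain ⟨e1eq, e2eq, e3eq⟩ := hs
    subst e1eq; subst e2eq; subst e3eq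
    have hple : ‖z1 * z2 * z3‖ ≤ 1 := by
      rw [norm_mul, norm_mul]
      exact mul_le_one₀ (mul_le_one₀ h1 (norm_nonneg _) h2) (norm_nonneg _) h3
    refine ⟨hple, ?_⟩
    rcases lt_or_eq_of_le hple with hlt | heq1
    · exact gamma2_branch_lt z1 z2 z3 h1 h2 h3 hlt
    · exact gamma2_branch_eq z1 z2 z3 h1 h2 h3 heq1
  · rintro ⟨hp, c1, c2, ⟨w1, w2, hw1, hw2, hc⟩, he1, he2⟩
    rw [Prod.mk.injEq] at hc
    obtain ⟨hcc1, hcc2⟩ := hc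
    subst hcc1; subst hcc2
    obtain ⟨t1, t2, t3, hb1, hb2, hb3, g1, g2, g3⟩ :=
      cubic_roots' s1 s2 p (gamma3_noroot s1 s2 p w1 w2 hp hw1 hw2 he1 he2)
    exact ⟨t1, t2, t3, hb1, hb2, hb3, by rw [Prod.mk.injEq, Prod.mk.injEq]; exact ⟨g1, g2, g3⟩⟩
end

section
/- If (s₁,s₂,p) ∈ Γ₃, then for every real number k ≥ 3 and every α ∈ ℂ with |α| ≤ 1, one has |kα³p − α²s₂| ≤ |k − αs₁| and |kα³p − αs₁| ≤ |k − α²s₂|. -/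
lemma norm_sq_c (z : ℂ) : ‖z‖^2 = Complex.normSq z := by rw [Complex.sq_norm]

lemma wbound (b c : ℂ) (hb : ‖b‖ ≤ 1) (hc : ‖c‖ ≤ 1) :
    ‖b*(1-(Complex.normSq c:ℂ)) + c*(1-(Complex.normSq b:ℂ))‖
      ≤ 1 - Complex.normSq b * Complex.normSq c := by
  have hb2 : Complex.normSq b = ‖b‖^2 := (norm_sq_c b).symm
  have hc2 : Complex.normSq c = ‖c‖^2 := (norm_sq_c c).symm
  have h1 : ‖b*(1-(Complex.normSq c:ℂ))‖ = ‖b‖*(1 - Complex.normSq c) := by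
    rw [norm_mul]
    congr 1
    rw [show ((1:ℂ) - (Complex.normSq c:ℂ)) = ((1 - Complex.normSq c : ℝ):ℂ) by push_cast; ring,
      Complex.norm_real, Real.norm_eq_abs, abs_of_nonneg]
    nlinarith [norm_nonneg c]
  have h2 : ‖c*(1-(Complex.normSq b:ℂ))‖ = ‖c‖*(1 - Complex.normSq b) := by
    rw [norm_mul]
    congr 1
    rw [show ((1:ℂ) - (Complex.normSq b:ℂ)) = ((1 - Complex.normSq b : ℝ):ℂ) by push_cast; ring,
      Complex.norm_real, Real.norm_eq_abs, abs_of_nonneg]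
    nlinarith [norm_nonneg b]
  calc ‖b*(1-(Complex.normSq c:ℂ)) + c*(1-(Complex.normSq b:ℂ))‖
      ≤ ‖b*(1-(Complex.normSq c:ℂ))‖ + ‖c*(1-(Complex.normSq b:ℂ))‖ := norm_add_le _ _
    _ = ‖b‖*(1 - Complex.normSq c) + ‖c‖*(1 - Complex.normSq b) := by rw [h1, h2]
    _ ≤ 1 - Complex.normSq b * Complex.normSq c := by
        rw [hb2, hc2]
        nlinarith [mul_nonneg (mul_nonneg (by linarith [norm_nonneg b] : (0:ℝ) ≤ 1-‖b‖)
          (by linarith [norm_nonneg c] : (0:ℝ) ≤ 1-‖c‖))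
          (by nlinarith [norm_nonneg b, norm_nonneg c] : (0:ℝ) ≤ 1-‖b‖*‖c‖)]

lemma Sone (k t : ℝ) (w : ℂ) (hk : 3 ≤ k) (ht : 0 ≤ t) (hw : ‖w‖ ≤ t) :
    2*‖((k*t : ℝ):ℂ) - w‖ ≤ (k^2+1)*t - 2*k*w.re := by
  have hw2 : ‖w‖^2 = w.re^2 + w.im^2 := by rw [norm_sq_c, Complex.normSq_apply]; ring
  have hri : w.re^2 + w.im^2 ≤ t^2 := by nlinarith [norm_nonneg w]
  have hrt : w.re ≤ t := by
    have := Complex.re_le_norm w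
    linarith
  have hn2 : ‖((k*t:ℝ):ℂ) - w‖^2 = (k*t - w.re)^2 + w.im^2 := by
    rw [norm_sq_c]
    simp [Complex.normSq_apply, Complex.sub_re, Complex.sub_im, Complex.ofReal_re,
      Complex.ofReal_im]
    ring
  have hf1 : 0 ≤ (k^2-3)*t - 2*k*w.re := by
    nlinarith [mul_nonneg (mul_nonneg (by linarith : (0:ℝ) ≤ k-3) (by linarith : (0:ℝ) ≤ k+1)) ht,
      mul_le_mul_of_nonneg_left hrt (by linarith : (0:ℝ) ≤ 2*k)]
  have hf2 : 0 ≤ (k^2+1)*t - 2*k*w.re := by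
    nlinarith [mul_le_mul_of_nonneg_left hrt (by linarith : (0:ℝ) ≤ 2*k),
      mul_nonneg (sq_nonneg (k-1)) ht]
  have hsq : 4*((k*t-w.re)^2 + w.im^2) ≤ ((k^2+1)*t - 2*k*w.re)^2 := by
    nlinarith [mul_nonneg hf1 hf2, hri]
  nlinarith [hn2, hsq, hf2, norm_nonneg (((k*t:ℝ):ℂ) - w)]

lemma mob (A B X Y u : ℂ) (hu : ‖u‖ ≤ 1)
    (hB : 2 * ‖(starRingEnd ℂ) A * B - X * (starRingEnd ℂ) Y‖ ≤ ‖A‖^2 + ‖B‖^2 - ‖X‖^2 - ‖Y‖^2)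
    (hD : ‖B‖^2 + ‖Y‖^2 ≤ ‖A‖^2 + ‖X‖^2)
    (hAY : ‖Y‖ ≤ ‖A‖) :
    ‖X*u - Y‖ ≤ ‖A - B*u‖ := by
  refine le_of_pow_le_pow_left₀ two_ne_zero (norm_nonneg _) ?_
  set c := (starRingEnd ℂ) A * B - X * (starRingEnd ℂ) Y with hc
  have e1 : ‖X*u - Y‖^2 = ‖X‖^2*‖u‖^2 + ‖Y‖^2 - 2*((X * (starRingEnd ℂ) Y)*u).re := by
    rw [norm_sq_c, Complex.normSq_sub, norm_sq_c, norm_sq_c, Complex.normSq_mul, norm_sq_c]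
    ring_nf
  have e2 : ‖A - B*u‖^2 = ‖A‖^2 + ‖B‖^2*‖u‖^2 - 2*(((starRingEnd ℂ) A * B)*u).re := by
    rw [norm_sq_c, norm_sq_c, norm_sq_c, norm_sq_c]
    simp only [Complex.normSq_apply, Complex.sub_re, Complex.sub_im, Complex.mul_re,
      Complex.mul_im, Complex.conj_re, Complex.conj_im]
    ring
  have hre : (c*u).re ≤ ‖c‖ * ‖u‖ := by
    have h2 := Complex.re_le_norm (c*u)
    rw [norm_mul] at h2
    exact h2
  have hsplit : (((starRingEnd ℂ) A * B)*u).re - ((X * (starRingEnd ℂ) Y)*u).re = (c*u).re := by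
    rw [hc, sub_mul, Complex.sub_re]
  have h1 : (0:ℝ) ≤ (1-‖u‖)^2 * (‖A‖^2 - ‖Y‖^2) := by
    apply mul_nonneg (sq_nonneg _)
    nlinarith [norm_nonneg Y]
  have h2 : (0:ℝ) ≤ ‖u‖*(1-‖u‖) * (‖A‖^2 + ‖X‖^2 - ‖B‖^2 - ‖Y‖^2) := by
    apply mul_nonneg (mul_nonneg (norm_nonneg u) (by linarith))
    linarith
  have h4 : 2*‖c‖*‖u‖ ≤ (‖A‖^2 + ‖B‖^2 - ‖X‖^2 - ‖Y‖^2) * ‖u‖ := by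
    apply mul_le_mul_of_nonneg_right _ (norm_nonneg u)
    linarith
  rw [e1, e2]
  nlinarith [hre, hsplit, h1, h2, h4]

lemma dcond (a m XX : ℝ) (hX0 : 0 ≤ XX) (hX : m*a - (1-m^2) ≤ XX) (ha : 2 - m ≤ a)
    (hm0 : 0 ≤ m) (hm1 : m ≤ 1) : 1 + m^2 ≤ a^2 + XX^2 := by
  rcases le_or_gt m (3/4) with hm | hm
  · nlinarith [sq_nonneg XX, sq_nonneg (a - (2-m))]
  · nlinarith [sq_nonneg (XX - (2*m-1)), sq_nonneg (a - (2-m)), sq_nonneg (m-1),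
      mul_nonneg (mul_nonneg hm0 (by linarith : (0:ℝ) ≤ a - (2-m))) (by linarith : (0:ℝ) ≤ 2*m-1)]

lemma L1 (k : ℝ) (hk : 3 ≤ k) (a b c : ℂ) (ha : ‖a‖ ≤ 1) (hb : ‖b‖ ≤ 1) (hc : ‖c‖ ≤ 1) :
    ‖(k:ℂ)*(a*b*c) - (a*b + b*c + c*a)‖ ≤ ‖(k:ℂ) - (a+b+c)‖ := by
  have hb2 : Complex.normSq b = ‖b‖^2 := (norm_sq_c b).symm
  have hc2 : Complex.normSq c = ‖c‖^2 := (norm_sq_c c).symm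
  have ht : (0:ℝ) ≤ 1 - Complex.normSq b * Complex.normSq c := by
    rw [hb2, hc2]
    nlinarith [mul_nonneg (norm_nonneg b) (norm_nonneg c), mul_le_one₀ hb (norm_nonneg c) hc]
  have hW := wbound b c hb hc
  -- norm of Y and bounds
  have hYn : ‖b*c‖ = ‖b‖*‖c‖ := norm_mul b c
  have hY1 : ‖b*c‖ ≤ 1 := by rw [hYn]; nlinarith [norm_nonneg b, norm_nonneg c]
  have hY2 : ‖b*c‖^2 = Complex.normSq b * Complex.normSq c := by
    rw [hYn, hb2, hc2]; ring
  -- lower bound for ‖A‖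
  have hbc : ‖b+c‖ ≤ 1 + ‖b*c‖ := by
    calc ‖b+c‖ ≤ ‖b‖ + ‖c‖ := norm_add_le _ _
      _ ≤ 1 + ‖b‖*‖c‖ := by nlinarith [norm_nonneg b, norm_nonneg c]
      _ = 1 + ‖b*c‖ := by rw [hYn]
  have hA_lb : 2 - ‖b*c‖ ≤ ‖(k:ℂ) - b - c‖ := by
    have h1 : ‖(k:ℂ)‖ - ‖b+c‖ ≤ ‖(k:ℂ) - (b+c)‖ := norm_sub_norm_le _ _
    have h2 : ‖(k:ℂ)‖ = k := by rw [Complex.norm_real, Real.norm_eq_abs, abs_of_nonneg]; linarith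
    have h3 : (k:ℂ) - (b+c) = (k:ℂ) - b - c := by ring
    rw [h3, h2] at h1
    linarith
  -- lower bound for ‖X‖
  have hX_lb : ‖b*c‖*‖(k:ℂ) - b - c‖ - (1 - ‖b*c‖^2) ≤ ‖(k:ℂ)*(b*c) - b - c‖ := by
    have idX : (k:ℂ)*(b*c) - b - c
        = (b*c)*((k:ℂ) - (starRingEnd ℂ) (b+c)) - ((b+c) - (starRingEnd ℂ) (b+c) * (b*c)) := by
      ring
    have idW : (b+c) - (starRingEnd ℂ) (b+c) * (b*c)
        = b*(1-(Complex.normSq c:ℂ)) + c*(1-(Complex.normSq b:ℂ)) := by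
      simp only [map_add]
      rw [Complex.ext_iff]
      constructor <;>
      · simp only [Complex.normSq_apply, Complex.sub_re, Complex.sub_im, Complex.add_re,
          Complex.add_im, Complex.mul_re, Complex.mul_im, Complex.conj_re, Complex.conj_im,
          Complex.ofReal_re, Complex.ofReal_im, Complex.one_re, Complex.one_im]
        ring
    have hconj : ‖(k:ℂ) - (starRingEnd ℂ) (b+c)‖ = ‖(k:ℂ) - b - c‖ := by
      have : (k:ℂ) - (starRingEnd ℂ) (b+c) = (starRingEnd ℂ) ((k:ℂ) - (b+c)) := by
        simp only [map_sub, Complex.conj_ofReal]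
      rw [this, RCLike.norm_conj]
      congr 1; ring
    calc ‖b*c‖*‖(k:ℂ) - b - c‖ - (1 - ‖b*c‖^2)
        ≤ ‖(b*c)*((k:ℂ) - (starRingEnd ℂ) (b+c))‖ - ‖(b+c) - (starRingEnd ℂ) (b+c) * (b*c)‖ := by
          rw [norm_mul (b*c) ((k:ℂ) - (starRingEnd ℂ) (b+c)), hconj, idW]
          have : 1 - ‖b*c‖^2 = 1 - Complex.normSq b * Complex.normSq c := by rw [hY2]
          linarith [hW]
      _ ≤ ‖(b*c)*((k:ℂ) - (starRingEnd ℂ) (b+c)) - ((b+c) - (starRingEnd ℂ) (b+c) * (b*c))‖ :=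
          norm_sub_norm_le _ _
      _ = ‖(k:ℂ)*(b*c) - b - c‖ := by rw [← idX]
  -- apply mob with A := k - b - c, B := 1, X := k*(b*c) - b - c, Y := b*c, u := a
  have goal_eq1 : (k:ℂ)*(a*b*c) - (a*b + b*c + c*a) = ((k:ℂ)*(b*c) - b - c)*a - b*c := by ring
  have goal_eq2 : (k:ℂ) - (a+b+c) = ((k:ℂ) - b - c) - 1*a := by ring
  rw [goal_eq1, goal_eq2]
  apply mob _ _ _ _ _ ha
  · -- boundary condition
    have idc : (starRingEnd ℂ) ((k:ℂ) - b - c) * 1 - ((k:ℂ)*(b*c) - b - c) * (starRingEnd ℂ) (b*c)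
        = ((k * (1 - Complex.normSq b * Complex.normSq c) : ℝ):ℂ)
          - (starRingEnd ℂ) (b*(1-(Complex.normSq c:ℂ)) + c*(1-(Complex.normSq b:ℂ))) := by
      rw [Complex.ext_iff]
      constructor <;>
      · simp only [map_add, map_mul, map_sub, map_one, Complex.normSq_apply, Complex.sub_re,
          Complex.sub_im, Complex.add_re, Complex.add_im, Complex.mul_re, Complex.mul_im,
          Complex.conj_re, Complex.conj_im, Complex.ofReal_re, Complex.ofReal_im,
          Complex.one_re, Complex.one_im, mul_one]
        ring
    have idr : ‖(k:ℂ) - b - c‖^2 + ‖(1:ℂ)‖^2 - ‖(k:ℂ)*(b*c) - b - c‖^2 - ‖b*c‖^2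
        = (k^2+1)*(1 - Complex.normSq b * Complex.normSq c)
          - 2*k*((starRingEnd ℂ) (b*(1-(Complex.normSq c:ℂ)) + c*(1-(Complex.normSq b:ℂ)))).re := by
      rw [norm_sq_c, norm_sq_c, norm_sq_c, norm_sq_c]
      simp only [map_add, map_mul, map_sub, map_one, Complex.normSq_apply, Complex.sub_re,
        Complex.sub_im, Complex.add_re, Complex.add_im, Complex.mul_re, Complex.mul_im,
        Complex.conj_re, Complex.conj_im, Complex.ofReal_re, Complex.ofReal_im,
        Complex.one_re, Complex.one_im]
      ring
    rw [idc, idr]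
    apply Sone k _ _ hk ht
    rw [RCLike.norm_conj]
    exact hW
  · -- D condition
    have h1 : ‖(1:ℂ)‖ = 1 := norm_one
    rw [h1]
    have := dcond ‖(k:ℂ) - b - c‖ ‖b*c‖ ‖(k:ℂ)*(b*c) - b - c‖ (norm_nonneg _) hX_lb hA_lb
      (norm_nonneg _) hY1
    nlinarith [this]
  · -- ‖Y‖ ≤ ‖A‖
    linarith

set_option maxHeartbeats 1000000 in
lemma L2 (k : ℝ) (hk : 3 ≤ k) (a b c : ℂ) (ha : ‖a‖ ≤ 1) (hb : ‖b‖ ≤ 1) (hc : ‖c‖ ≤ 1) :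
    ‖(k:ℂ)*(a*b*c) - (a+b+c)‖ ≤ ‖(k:ℂ) - (a*b + b*c + c*a)‖ := by
  have hb2 : Complex.normSq b = ‖b‖^2 := (norm_sq_c b).symm
  have hc2 : Complex.normSq c = ‖c‖^2 := (norm_sq_c c).symm
  have ht : (0:ℝ) ≤ 1 - Complex.normSq b * Complex.normSq c := by
    rw [hb2, hc2]
    nlinarith [mul_nonneg (norm_nonneg b) (norm_nonneg c), mul_le_one₀ hb (norm_nonneg c) hc]
  have hW := wbound b c hb hc
  have hYn : ‖b*c‖ = ‖b‖*‖c‖ := norm_mul b c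
  have hY1 : ‖b*c‖ ≤ 1 := by rw [hYn]; nlinarith [norm_nonneg b, norm_nonneg c]
  have goal_eq1 : (k:ℂ)*(a*b*c) - (a+b+c) = ((k:ℂ)*(b*c) - 1)*a - (b+c) := by ring
  have goal_eq2 : (k:ℂ) - (a*b + b*c + c*a) = ((k:ℂ) - b*c) - (b+c)*a := by ring
  rw [goal_eq1, goal_eq2]
  have hA_lb : k - 1 ≤ ‖(k:ℂ) - b*c‖ := by
    have h1 : ‖(k:ℂ)‖ - ‖b*c‖ ≤ ‖(k:ℂ) - b*c‖ := norm_sub_norm_le _ _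
    have h2 : ‖(k:ℂ)‖ = k := by rw [Complex.norm_real, Real.norm_eq_abs, abs_of_nonneg]; linarith
    rw [h2] at h1
    linarith
  have hBY : ‖b+c‖ ≤ 2 := by
    calc ‖b+c‖ ≤ ‖b‖ + ‖c‖ := norm_add_le _ _
      _ ≤ 2 := by linarith
  apply mob _ _ _ _ _ ha
  · -- boundary condition
    set W := b*(1-(Complex.normSq c:ℂ)) + c*(1-(Complex.normSq b:ℂ)) with hWdef
    have idc : (starRingEnd ℂ) ((k:ℂ) - b*c) * (b+c) - ((k:ℂ)*(b*c) - 1) * (starRingEnd ℂ) (b+c)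
        = (k:ℂ)*W + (starRingEnd ℂ) W := by
      rw [hWdef, Complex.ext_iff]
      constructor <;>
      · simp only [map_add, map_mul, map_sub, map_one, Complex.normSq_apply, Complex.sub_re,
          Complex.sub_im, Complex.add_re, Complex.add_im, Complex.mul_re, Complex.mul_im,
          Complex.conj_re, Complex.conj_im, Complex.ofReal_re, Complex.ofReal_im,
          Complex.one_re, Complex.one_im, mul_one]
        ring
    have idr : ‖(k:ℂ) - b*c‖^2 + ‖b+c‖^2 - ‖(k:ℂ)*(b*c) - 1‖^2 - ‖b+c‖^2
        = (k^2-1)*(1 - Complex.normSq b * Complex.normSq c) := by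
      simp only [norm_sq_c]
      simp only [Complex.normSq_apply, Complex.sub_re, Complex.sub_im, Complex.mul_re,
        Complex.mul_im, Complex.ofReal_re, Complex.ofReal_im, Complex.one_re, Complex.one_im]
      ring
    rw [idc, idr]
    calc 2*‖(k:ℂ)*W + (starRingEnd ℂ) W‖ ≤ 2*(‖(k:ℂ)*W‖ + ‖(starRingEnd ℂ) W‖) := by
          linarith [norm_add_le ((k:ℂ)*W) ((starRingEnd ℂ) W)]
      _ = 2*(k*‖W‖ + ‖W‖) := by
          rw [norm_mul, RCLike.norm_conj, Complex.norm_real, Real.norm_eq_abs,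
            abs_of_nonneg (by linarith : (0:ℝ) ≤ k)]
      _ ≤ (k^2-1)*(1 - Complex.normSq b * Complex.normSq c) := by
          nlinarith [hW, norm_nonneg W, mul_nonneg (mul_nonneg (by linarith : (0:ℝ) ≤ k-3)
            (by linarith : (0:ℝ) ≤ k+1)) ht]
  · -- D condition
    have hR1 : (b*c).re ≤ ‖b‖*‖c‖ := by
      have := Complex.re_le_norm (b*c)
      rw [norm_mul] at this
      exact this
    have hR2 : (b*(starRingEnd ℂ) c).re ≤ ‖b‖*‖c‖ := by
      have := Complex.re_le_norm (b*(starRingEnd ℂ) c)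
      rw [norm_mul, RCLike.norm_conj] at this
      exact this
    have hA2 : ‖(k:ℂ) - b*c‖^2 = k^2 - 2*k*(b*c).re + ‖b‖^2*‖c‖^2 := by
      rw [norm_sq_c]
      rw [show ‖b‖^2*‖c‖^2 = Complex.normSq b * Complex.normSq c by rw [hb2, hc2]]
      simp only [Complex.normSq_apply, Complex.sub_re, Complex.sub_im, Complex.mul_re,
        Complex.mul_im, Complex.ofReal_re, Complex.ofReal_im]
      ring
    have hX2 : ‖(k:ℂ)*(b*c) - 1‖^2 = k^2*(‖b‖^2*‖c‖^2) - 2*k*(b*c).re + 1 := by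
      rw [norm_sq_c]
      rw [show ‖b‖^2*‖c‖^2 = Complex.normSq b * Complex.normSq c by rw [hb2, hc2]]
      simp only [Complex.normSq_apply, Complex.sub_re, Complex.sub_im, Complex.mul_re,
        Complex.mul_im, Complex.ofReal_re, Complex.ofReal_im, Complex.one_re, Complex.one_im]
      ring
    have hB2 : ‖b+c‖^2 = ‖b‖^2 + ‖c‖^2 + 2*(b*(starRingEnd ℂ) c).re := by
      rw [norm_sq_c, norm_sq_c, norm_sq_c]
      simp only [Complex.normSq_apply, Complex.add_re, Complex.add_im, Complex.mul_re,
        Complex.mul_im, Complex.conj_re, Complex.conj_im]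
      ring
    rw [hA2, hX2, hB2]
    nlinarith [mul_nonneg (by nlinarith : (0:ℝ) ≤ k^2-1) (sq_nonneg (1-‖b‖*‖c‖)),
      mul_nonneg (mul_nonneg (by nlinarith : (0:ℝ) ≤ (k-3)*(k+1)) (norm_nonneg b)) (norm_nonneg c),
      mul_nonneg (by nlinarith [norm_nonneg b] : (0:ℝ) ≤ 1-‖b‖^2)
        (by nlinarith [norm_nonneg c] : (0:ℝ) ≤ 1-‖c‖^2),
      mul_nonneg (by linarith : (0:ℝ) ≤ k) (sub_nonneg.2 hR1),
      mul_nonneg (mul_nonneg (by nlinarith : (0:ℝ) ≤ (k-3)*(k+1)) (norm_nonneg b))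
        (mul_nonneg (norm_nonneg c) (mul_nonneg (norm_nonneg b) (norm_nonneg c)))]
  · -- ‖Y‖ ≤ ‖A‖
    linarith

theorem gamma3_pencil_scalar_inequalities (s1 s2 p : ℂ) (h : (s1, s2, p) ∈ Gamma3)
    (k : ℝ) (hk : 3 ≤ k) (α : ℂ) (hα : ‖α‖ ≤ 1) :
    ‖(k : ℂ) * α ^ 3 * p - α ^ 2 * s2‖ ≤ ‖(k : ℂ) - α * s1‖ ∧
    ‖(k : ℂ) * α ^ 3 * p - α * s1‖ ≤ ‖(k : ℂ) - α ^ 2 * s2‖ := by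
  obtain ⟨z1, z2, z3, h1, h2, h3, heq⟩ := h
  simp only [Prod.mk.injEq] at heq
  obtain ⟨e1, e2, e3⟩ := heq
  have na : ‖α*z1‖ ≤ 1 := by rw [norm_mul]; exact mul_le_one₀ hα (norm_nonneg _) h1
  have nb : ‖α*z2‖ ≤ 1 := by rw [norm_mul]; exact mul_le_one₀ hα (norm_nonneg _) h2
  have nc : ‖α*z3‖ ≤ 1 := by rw [norm_mul]; exact mul_le_one₀ hα (norm_nonneg _) h3
  constructor
  · have hL := L1 k hk (α*z1) (α*z2) (α*z3) na nb nc
    have eqL : (k:ℂ) * α ^ 3 * p - α ^ 2 * s2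
        = (k:ℂ)*((α*z1)*(α*z2)*(α*z3)) - ((α*z1)*(α*z2) + (α*z2)*(α*z3) + (α*z3)*(α*z1)) := by
      rw [e2, e3]; ring
    have eqR : (k:ℂ) - α * s1 = (k:ℂ) - ((α*z1) + (α*z2) + (α*z3)) := by rw [e1]; ring
    rw [eqL, eqR]; exact hL
  · have hL := L2 k hk (α*z1) (α*z2) (α*z3) na nb nc
    have eqL : (k:ℂ) * α ^ 3 * p - α * s1
        = (k:ℂ)*((α*z1)*(α*z2)*(α*z3)) - ((α*z1) + (α*z2) + (α*z3)) := by
      rw [e1, e3]; ring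
    have eqR : (k:ℂ) - α ^ 2 * s2
        = (k:ℂ) - ((α*z1)*(α*z2) + (α*z2)*(α*z3) + (α*z3)*(α*z1)) := by rw [e2]; ring
    rw [eqL, eqR]; exact hL
end

section
/- (Positivity of the operator pencils) Let (S₁,S₂,P) be a Γ₃-contraction on a complex Hilbert space H. Then for every real number k ≥ 3 and every α ∈ ℂ with |α| ≤ 1, the operators (kI − αS₁)*(kI − αS₁) − (kα³P − α²S₂)*(kα³P − α²S₂) and (kI − α²S₂)*(kI − α²S₂) − (kα³P − αS₁)*(kα³P − αS₁) are positive (self-adjoint with nonnegative quadratic form). -/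
noncomputable section Aux

open MvPolynomial Metric Finset Filter

/-- One-variable maximum modulus comparison on the closed unit disc. -/
lemma maxmod1 {F G : ℂ → ℂ} (hF : Differentiable ℂ F) (hG : Differentiable ℂ G)
    (hG0 : ∀ z : ℂ, ‖z‖ ≤ 1 → G z ≠ 0) (hb : ∀ z : ℂ, ‖z‖ = 1 → ‖F z‖ ≤ ‖G z‖) :
    ∀ z : ℂ, ‖z‖ ≤ 1 → ‖F z‖ ≤ ‖G z‖ := by
  intro z hz
  have hGz := hG0 z hz
  have hcl : closure (ball (0:ℂ) 1) = closedBall 0 1 := closure_ball 0 one_ne_zero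
  have hfr : frontier (ball (0:ℂ) 1) = sphere 0 1 := frontier_ball 0 one_ne_zero
  have hd : DiffContOnCl ℂ (fun w => F w / G w) (ball 0 1) := by
    refine ⟨(hF.differentiableOn).div hG.differentiableOn fun w hw =>
      hG0 w (le_of_lt (by simpa using hw)), ?_⟩
    rw [hcl]
    exact (hF.continuous.continuousOn).div hG.continuous.continuousOn fun w hw =>
      hG0 w (by simpa using hw)
  have key : ‖F z / G z‖ ≤ 1 := by
    refine Complex.norm_le_of_forall_mem_frontier_norm_le isBounded_ball hd ?_ ?_
    · intro w hw
      rw [hfr] at hw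
      have hw1 : ‖w‖ = 1 := by simpa using hw
      rw [norm_div]
      exact div_le_one_of_le₀ (hb w hw1) (norm_nonneg _)
    · rw [hcl]; simpa using hz
  calc ‖F z‖ = ‖F z / G z‖ * ‖G z‖ := by rw [← norm_mul, div_mul_cancel₀ _ hGz]
  _ ≤ 1 * ‖G z‖ := by gcongr
  _ = ‖G z‖ := one_mul _

/-- Peeling the maximum modulus principle over the three variables of the tridisc. -/
lemma tridisc_le (N D : ℂ → ℂ → ℂ → ℂ)
    (hN1 : ∀ b c, Differentiable ℂ (fun z => N z b c))
    (hN2 : ∀ a c, Differentiable ℂ (fun z => N a z c))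
    (hN3 : ∀ a b, Differentiable ℂ (N a b))
    (hD1 : ∀ b c, Differentiable ℂ (fun z => D z b c))
    (hD2 : ∀ a c, Differentiable ℂ (fun z => D a z c))
    (hD3 : ∀ a b, Differentiable ℂ (D a b))
    (hD0 : ∀ a b c : ℂ, ‖a‖ ≤ 1 → ‖b‖ ≤ 1 → ‖c‖ ≤ 1 → D a b c ≠ 0)
    (htor : ∀ a b c : ℂ, ‖a‖ = 1 → ‖b‖ = 1 → ‖c‖ = 1 → ‖N a b c‖ ≤ ‖D a b c‖) :
    ∀ a b c : ℂ, ‖a‖ ≤ 1 → ‖b‖ ≤ 1 → ‖c‖ ≤ 1 → ‖N a b c‖ ≤ ‖D a b c‖ := by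
  have s3 : ∀ a b c : ℂ, ‖a‖ = 1 → ‖b‖ = 1 → ‖c‖ ≤ 1 → ‖N a b c‖ ≤ ‖D a b c‖ := fun a b c ha hb hc =>
    maxmod1 (hN3 a b) (hD3 a b) (fun w hw => hD0 a b w ha.le hb.le hw)
      (fun w hw => htor a b w ha hb hw) c hc
  have s2 : ∀ a b c : ℂ, ‖a‖ = 1 → ‖b‖ ≤ 1 → ‖c‖ ≤ 1 → ‖N a b c‖ ≤ ‖D a b c‖ := fun a b c ha hb hc =>
    maxmod1 (hN2 a c) (hD2 a c) (fun w hw => hD0 a w c ha.le hw hc)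
      (fun w hw => s3 a w c ha hw hc) b hb
  exact fun a b c ha hb hc =>
    maxmod1 (hN1 b c) (hD1 b c) (fun w hw => hD0 w b c hw hb hc)
      (fun w hw => s2 w b c hw hb hc) a ha

lemma conj_of_norm_one {a : ℂ} (ha : ‖a‖ = 1) : (starRingEnd ℂ) a = a⁻¹ := by
  have h1 : a * (starRingEnd ℂ) a = 1 := by
    rw [Complex.mul_conj]; norm_cast
    rw [Complex.normSq_eq_norm_sq, ha]; norm_num
  exact eq_inv_of_mul_eq_one_right (by linear_combination h1)

lemma scalar1 {k : ℝ} (hk : 3 < k) :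
    ∀ z1 z2 z3 : ℂ, ‖z1‖ ≤ 1 → ‖z2‖ ≤ 1 → ‖z3‖ ≤ 1 →
      ‖(k:ℂ) * (z1 * z2 * z3) - (z1 * z2 + z2 * z3 + z3 * z1)‖ ≤ ‖(k:ℂ) - (z1 + z2 + z3)‖ := by
  have hD0 : ∀ a b c : ℂ, ‖a‖ ≤ 1 → ‖b‖ ≤ 1 → ‖c‖ ≤ 1 → (k:ℂ) - (a + b + c) ≠ 0 := by
    intro a b c ha hb hc h0
    have : (k:ℂ) = a + b + c := by linear_combination h0
    have hn : ‖(k:ℂ)‖ ≤ 3 := by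
      rw [this]
      calc ‖a + b + c‖ ≤ ‖a‖ + ‖b‖ + ‖c‖ := norm_add₃_le
      _ ≤ 3 := by linarith
    rw [Complex.norm_real, Real.norm_eq_abs, abs_of_pos (by linarith)] at hn
    linarith
  have htor : ∀ a b c : ℂ, ‖a‖ = 1 → ‖b‖ = 1 → ‖c‖ = 1 →
      ‖(k:ℂ) * (a * b * c) - (a * b + b * c + c * a)‖ = ‖(k:ℂ) - (a + b + c)‖ := by
    intro a b c ha hb hc
    have ha0 : a ≠ 0 := by intro h; rw [h] at ha; simp at ha
    have hb0 : b ≠ 0 := by intro h; rw [h] at hb; simp at hb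
    have hc0 : c ≠ 0 := by intro h; rw [h] at hc; simp at hc
    have h1 : (starRingEnd ℂ) a = a⁻¹ := conj_of_norm_one ha
    have h2 : (starRingEnd ℂ) b = b⁻¹ := conj_of_norm_one hb
    have h3 : (starRingEnd ℂ) c = c⁻¹ := conj_of_norm_one hc
    have key : (k:ℂ) * (a * b * c) - (a * b + b * c + c * a) =
        (a * b * c) * (starRingEnd ℂ) ((k:ℂ) - (a + b + c)) := by
      rw [map_sub, map_add, map_add, Complex.conj_ofReal, h1, h2, h3]
      field_simp
      ring
    rw [key, norm_mul, RCLike.norm_conj, norm_mul, norm_mul, ha, hb, hc]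
    ring
  refine tridisc_le _ _ ?_ ?_ ?_ ?_ ?_ ?_ hD0 (fun a b c ha hb hc => (htor a b c ha hb hc).le)
    <;> intro u v <;> fun_prop

lemma scalar2 {k : ℝ} (hk : 3 < k) :
    ∀ z1 z2 z3 : ℂ, ‖z1‖ ≤ 1 → ‖z2‖ ≤ 1 → ‖z3‖ ≤ 1 →
      ‖(k:ℂ) * (z1 * z2 * z3) - (z1 + z2 + z3)‖ ≤ ‖(k:ℂ) - (z1 * z2 + z2 * z3 + z3 * z1)‖ := by
  have hD0 : ∀ a b c : ℂ, ‖a‖ ≤ 1 → ‖b‖ ≤ 1 → ‖c‖ ≤ 1 →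
      (k:ℂ) - (a * b + b * c + c * a) ≠ 0 := by
    intro a b c ha hb hc h0
    have : (k:ℂ) = a * b + b * c + c * a := by linear_combination h0
    have hn : ‖(k:ℂ)‖ ≤ 3 := by
      rw [this]
      calc ‖a * b + b * c + c * a‖ ≤ ‖a * b‖ + ‖b * c‖ + ‖c * a‖ := norm_add₃_le
      _ ≤ 3 := by
        rw [norm_mul, norm_mul, norm_mul]
        nlinarith [norm_nonneg a, norm_nonneg b, norm_nonneg c]
    rw [Complex.norm_real, Real.norm_eq_abs, abs_of_pos (by linarith)] at hn
    linarith
  have htor : ∀ a b c : ℂ, ‖a‖ = 1 → ‖b‖ = 1 → ‖c‖ = 1 →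
      ‖(k:ℂ) * (a * b * c) - (a + b + c)‖ = ‖(k:ℂ) - (a * b + b * c + c * a)‖ := by
    intro a b c ha hb hc
    have ha0 : a ≠ 0 := by intro h; rw [h] at ha; simp at ha
    have hb0 : b ≠ 0 := by intro h; rw [h] at hb; simp at hb
    have hc0 : c ≠ 0 := by intro h; rw [h] at hc; simp at hc
    have h1 : (starRingEnd ℂ) a = a⁻¹ := conj_of_norm_one ha
    have h2 : (starRingEnd ℂ) b = b⁻¹ := conj_of_norm_one hb
    have h3 : (starRingEnd ℂ) c = c⁻¹ := conj_of_norm_one hc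
    have key : (k:ℂ) * (a * b * c) - (a + b + c) =
        (a * b * c) * (starRingEnd ℂ) ((k:ℂ) - (a * b + b * c + c * a)) := by
      rw [map_sub, map_add, map_add, Complex.conj_ofReal, map_mul, map_mul, map_mul,
        h1, h2, h3]
      field_simp
      ring
    rw [key, norm_mul, RCLike.norm_conj, norm_mul, norm_mul, ha, hb, hc]
    ring
  refine tridisc_le _ _ ?_ ?_ ?_ ?_ ?_ ?_ hD0 (fun a b c ha hb hc => (htor a b c ha hb hc).le)
    <;> intro u v <;> fun_prop

end Aux

noncomputable section Op

open MvPolynomial Metric Finset Filter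

variable {H : Type*} [NormedAddCommGroup H] [InnerProductSpace ℂ H] [CompleteSpace H]

lemma opEval3_monomial (S1 S2 P : H →L[ℂ] H) (u : Fin 3 →₀ ℕ) (c : ℂ) :
    opEval3 S1 S2 P (monomial u c) = c • (S1 ^ u 0 * S2 ^ u 1 * P ^ u 2) := by
  rw [opEval3, sum_monomial_eq]
  rw [zero_smul]

lemma opEval3_sub (S1 S2 P : H →L[ℂ] H) (p q : MvPolynomial (Fin 3) ℂ) :
    opEval3 S1 S2 P (p - q) = opEval3 S1 S2 P p - opEval3 S1 S2 P q := by
  rw [opEval3, opEval3, opEval3, AddMonoidAlgebra.coeff_sub]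
  exact Finsupp.sum_sub_index (fun _ _ _ => sub_smul _ _ _)

lemma opEval3_X (S1 S2 P : H →L[ℂ] H) (i : Fin 3) :
    opEval3 S1 S2 P (X i) = ![S1, S2, P] i := by
  rw [X, opEval3_monomial]
  fin_cases i <;> simp [Finsupp.single_apply]

set_option synthInstance.maxHeartbeats 1000000 in
set_option maxHeartbeats 1000000 in
lemma opEval3_hom (S1 S2 P : H →L[ℂ] H)
    (h12 : Commute S1 S2) (h13 : Commute S1 P) (h23 : Commute S2 P) :
    ∃ ψ : MvPolynomial (Fin 3) ℂ →ₐ[ℂ] (H →L[ℂ] H),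
      (∀ q, opEval3 S1 S2 P q = ψ q) ∧ ψ (X 0) = S1 ∧ ψ (X 1) = S2 ∧ ψ (X 2) = P := by
  classical
  set s : Set (H →L[ℂ] H) := {S1, S2, P} with hs
  have hcomm : ∀ a ∈ s, ∀ b ∈ s, a * b = b * a := by
    rintro a (rfl | rfl | rfl) b (rfl | rfl | rfl)
    · rfl
    · exact h12
    · exact h13
    · exact h12.symm
    · rfl
    · exact h23
    · exact h13.symm
    · exact h23.symm
    · rfl
  letI : CommRing (Algebra.adjoin ℂ s) := Algebra.adjoinCommRingOfComm ℂ hcomm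
  have m1 : S1 ∈ Algebra.adjoin ℂ s := Algebra.subset_adjoin (by simp [hs])
  have m2 : S2 ∈ Algebra.adjoin ℂ s := Algebra.subset_adjoin (by simp [hs])
  have m3 : P ∈ Algebra.adjoin ℂ s := Algebra.subset_adjoin (by simp [hs])
  set v : Fin 3 → Algebra.adjoin ℂ s := ![⟨S1, m1⟩, ⟨S2, m2⟩, ⟨P, m3⟩] with hv
  refine ⟨((Algebra.adjoin ℂ s).val).comp (aeval v), ?_, ?_, ?_, ?_⟩
  · intro q
    induction q using MvPolynomial.induction_on' with
    | monomial u c =>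
      rw [opEval3_monomial, AlgHom.comp_apply, aeval_monomial, Finsupp.prod_pow,
        Fin.prod_univ_three]
      simp [hv, Algebra.smul_def]
    | add p q hp hq =>
      rw [map_add, ← hp, ← hq, opEval3, opEval3, opEval3, AddMonoidAlgebra.coeff_add]
      exact Finsupp.sum_add_index' (fun m => zero_smul _ _) (fun m b1 b2 => add_smul _ _ _)
  · simp [hv]
  · simp [hv]
  · simp [hv]

lemma gamma3_coord_bound : ∀ w ∈ Gamma3, ∀ i : Fin 3, ‖![w.1, w.2.1, w.2.2] i‖ ≤ 3 := by
  rintro w ⟨z1, z2, z3, h1, h2, h3, rfl⟩ i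
  have n1 := norm_nonneg z1
  have n2 := norm_nonneg z2
  have n3 := norm_nonneg z3
  fin_cases i
  · calc ‖z1 + z2 + z3‖ ≤ ‖z1‖ + ‖z2‖ + ‖z3‖ := norm_add₃_le
    _ ≤ 3 := by linarith
  · calc ‖z1 * z2 + z2 * z3 + z3 * z1‖ ≤ ‖z1 * z2‖ + ‖z2 * z3‖ + ‖z3 * z1‖ := norm_add₃_le
    _ ≤ 3 := by rw [norm_mul, norm_mul, norm_mul]; nlinarith
  · calc ‖z1 * z2 * z3‖ = ‖z1‖ * ‖z2‖ * ‖z3‖ := by rw [norm_mul, norm_mul]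
    _ ≤ 1 := mul_le_one₀ (mul_le_one₀ h1 n2 h2) n3 h3
    _ ≤ 3 := by norm_num

lemma gamma3_biSup_le {C : ℝ} (hC : 0 ≤ C) (f : ℂ × ℂ × ℂ → ℝ)
    (hb : ∀ w ∈ Gamma3, f w ≤ C) : (⨆ w ∈ Gamma3, f w) ≤ C :=
  Real.iSup_le (fun w => Real.iSup_le (fun hw => hb w hw) hC) hC

end Op

noncomputable section Core

open MvPolynomial Metric Finset Filter Topology

variable {H : Type*} [NormedAddCommGroup H] [InnerProductSpace ℂ H] [CompleteSpace H]

lemma core {S1 S2 P : H →L[ℂ] H} (h : IsGamma3Contraction S1 S2 P)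
    {k : ℝ} (hk : 3 < k) (i : Fin 3) (β : ℂ) (hβ : ‖β‖ ≤ 1)
    (pN : MvPolynomial (Fin 3) ℂ)
    (hscal : ∀ w ∈ Gamma3, ‖eval ![w.1, w.2.1, w.2.2] pN‖ ≤
      ‖(k:ℂ) - β * ![w.1, w.2.1, w.2.2] i‖) :
    ∀ x : H, ‖opEval3 S1 S2 P pN x‖ ≤
      ‖((k:ℂ) • (1 : H →L[ℂ] H) - β • opEval3 S1 S2 P (X i)) x‖ := by
  obtain ⟨h12, h13, h23, hspec⟩ := h
  obtain ⟨ψ, hψ, hX0, hX1, hX2⟩ := opEval3_hom S1 S2 P h12 h13 h23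
  have hk0 : (0:ℝ) < k := by linarith
  have hkC : (k:ℂ) ≠ 0 := by
    simpa using (show k ≠ 0 by positivity)
  set T : H →L[ℂ] H := ψ (X i) with hT
  have hT3 : ‖T‖ ≤ 3 := by
    have h1 := hspec (X i)
    rw [hψ] at h1
    refine h1.trans (gamma3_biSup_le (by norm_num) _ fun w hw => ?_)
    rw [eval_X]
    exact gamma3_coord_bound w hw i
  set ρ : ℝ := 3 / k with hρ
  have hρ0 : 0 ≤ ρ := by positivity
  have hρ1 : ρ < 1 := by rw [hρ, div_lt_one hk0]; linarith
  set t : H →L[ℂ] H := (β / (k:ℂ)) • T with ht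
  have htn : ‖t‖ < 1 := by
    rw [ht, norm_smul]
    calc ‖β / (k:ℂ)‖ * ‖T‖ ≤ (1 / k) * 3 := by
          rw [norm_div, Complex.norm_real, Real.norm_eq_abs, abs_of_pos hk0]
          gcongr
    _ < 1 := by rw [div_mul_eq_mul_div, one_mul, div_lt_one hk0]; linarith
  have hts : Summable (fun n => t ^ n) := summable_geometric_of_norm_lt_one htn
  set A : H →L[ℂ] H := (k:ℂ) • 1 - β • T with hA
  set Dinv : H →L[ℂ] H := (k:ℂ)⁻¹ • ∑' n, t ^ n with hDinv
  have hA' : A = (k:ℂ) • ((1 : H →L[ℂ] H) - t) := by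
    rw [hA, smul_sub, ht, smul_smul, mul_div_cancel₀ _ hkC]
  have hDA : Dinv * A = 1 := by
    rw [hDinv, hA', smul_mul_smul_comm, inv_mul_cancel₀ hkC, one_smul,
      geom_series_mul_neg _ htn]
  set N : H →L[ℂ] H := ψ pN with hN
  set Aop : ℕ → (H →L[ℂ] H) := fun n => (k:ℂ)⁻¹ • ∑ j ∈ range n, t ^ j with hAop
  have hEq : ∀ n : ℕ, opEval3 S1 S2 P
      (pN * (C ((k:ℂ)⁻¹) * ∑ j ∈ range n, (C (β / (k:ℂ)) * X i) ^ j)) = N * Aop n := by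
    intro n
    rw [hψ, map_mul, map_mul, map_sum]
    simp only [map_pow, map_mul, map_smul, ← MvPolynomial.algebraMap_eq, AlgHom.commutes,
      ← Algebra.smul_def, ← hT, ← ht]
    rfl
  have hbound : ∀ n : ℕ, ‖N * Aop n‖ ≤ 1 + ρ ^ n := by
    intro n
    rw [← hEq n]
    have h1 := hspec (pN * (C ((k:ℂ)⁻¹) * ∑ j ∈ range n, (C (β / (k:ℂ)) * X i) ^ j))
    refine h1.trans (gamma3_biSup_le (by positivity) _ fun w hw => ?_)
    set wi : ℂ := ![w.1, w.2.1, w.2.2] i with hwi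
    have hwi3 : ‖wi‖ ≤ 3 := gamma3_coord_bound w hw i
    set x : ℂ := β / (k:ℂ) * wi with hx
    have hxρ : ‖x‖ ≤ ρ := by
      rw [hx, norm_mul, norm_div, Complex.norm_real, Real.norm_eq_abs, abs_of_pos hk0, hρ]
      calc ‖β‖ / k * ‖wi‖ ≤ 1 / k * 3 := by gcongr
      _ = 3 / k := by ring
    have hx1 : x ≠ 1 := fun hx1 => by rw [hx1] at hxρ; norm_num at hxρ; linarith
    have hDw : (k:ℂ) - β * wi ≠ 0 := by
      intro h0
      have : ‖(k:ℂ)‖ = ‖β * wi‖ := by rw [sub_eq_zero] at h0; rw [h0]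
      rw [Complex.norm_real, Real.norm_eq_abs, abs_of_pos hk0, norm_mul] at this
      nlinarith [norm_nonneg β, norm_nonneg wi]
    have heval : eval ![w.1, w.2.1, w.2.2]
        (pN * (C ((k:ℂ)⁻¹) * ∑ j ∈ range n, (C (β / (k:ℂ)) * X i) ^ j)) =
        eval ![w.1, w.2.1, w.2.2] pN * ((1 - x ^ n) / ((k:ℂ) - β * wi)) := by
      have hkx : (k:ℂ) - β * wi = (k:ℂ) * (1 - x) := by rw [hx]; field_simp
      rw [map_mul, map_mul, map_sum, eval_C]
      simp only [map_pow, map_mul, eval_C, eval_X, ← hwi, ← hx]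
      rw [geom_sum_eq hx1, hkx]
      congr 1
      have hx1' : x - 1 ≠ 0 := sub_ne_zero.mpr hx1
      have hx1'' : (1:ℂ) - x ≠ 0 := sub_ne_zero.mpr (Ne.symm hx1)
      field_simp
      ring
    rw [heval, norm_mul]
    have hxn : ‖1 - x ^ n‖ ≤ 1 + ρ ^ n := by
      calc ‖1 - x ^ n‖ ≤ ‖(1:ℂ)‖ + ‖x ^ n‖ := norm_sub_le _ _
      _ ≤ 1 + ρ ^ n := by
          rw [norm_one, norm_pow]
          gcongr
    have hDpos : 0 < ‖(k:ℂ) - β * wi‖ := norm_pos_iff.mpr hDw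
    have hNw := hscal w hw
    rw [← hwi] at hNw
    calc ‖eval ![w.1, w.2.1, w.2.2] pN‖ * ‖(1 - x ^ n) / ((k:ℂ) - β * wi)‖
        = ‖eval ![w.1, w.2.1, w.2.2] pN‖ * ‖1 - x ^ n‖ / ‖(k:ℂ) - β * wi‖ := by
          rw [norm_div, mul_div_assoc]
    _ ≤ ‖(k:ℂ) - β * wi‖ * (1 + ρ ^ n) / ‖(k:ℂ) - β * wi‖ := by
          gcongr
    _ = 1 + ρ ^ n := by rw [mul_comm, mul_div_assoc, div_self hDpos.ne', mul_one]
  have hconv : Tendsto (fun n => N * Aop n) atTop (𝓝 (N * Dinv)) := by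
    have h1 : Tendsto (fun n => ∑ j ∈ range n, t ^ j) atTop (𝓝 (∑' n, t ^ n)) :=
      hts.hasSum.tendsto_sum_nat
    have h2 : Tendsto Aop atTop (𝓝 Dinv) := h1.const_smul _
    exact h2.const_mul N
  have hlim : ‖N * Dinv‖ ≤ 1 := by
    have h2 : Tendsto (fun n : ℕ => 1 + ρ ^ n) atTop (𝓝 1) := by
      have := tendsto_pow_atTop_nhds_zero_of_lt_one hρ0 hρ1
      simpa using tendsto_const_nhds.add this
    exact le_of_tendsto_of_tendsto' hconv.norm h2 hbound
  intro x
  have hNfac : N = (N * Dinv) * A := by rw [mul_assoc, hDA, mul_one]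
  rw [hψ pN, ← hN, hψ (X i), ← hT, ← hA, hNfac]
  calc ‖((N * Dinv) * A) x‖ = ‖(N * Dinv) (A x)‖ := rfl
  _ ≤ ‖N * Dinv‖ * ‖A x‖ := ContinuousLinearMap.le_opNorm _ _
  _ ≤ 1 * ‖A x‖ := by gcongr
  _ = ‖A x‖ := one_mul _

end Core

noncomputable section Final

open MvPolynomial Metric Finset Filter Topology

variable {H : Type*} [NormedAddCommGroup H] [InnerProductSpace ℂ H] [CompleteSpace H]

lemma real_le_of_forall_pos {a b : ℝ} (h : ∀ ε : ℝ, 0 < ε → a ≤ b + ε) : a ≤ b := by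
  by_contra h'
  push_neg at h'
  have := h ((a - b) / 2) (by linarith)
  linarith

/-- The key norm domination, for one pencil, for all `k ≥ 3`. -/
lemma pencil_half {S1 S2 P : H →L[ℂ] H} (h : IsGamma3Contraction S1 S2 P)
    {k : ℝ} (hk : 3 ≤ k) (j : Fin 3) (β γ δ : ℂ) (hβ : ‖β‖ ≤ 1) (hδ : ‖δ‖ ≤ 1) (i : Fin 3)
    (hscal : ∀ k' : ℝ, 3 < k' → ∀ w ∈ Gamma3,
      ‖(k':ℂ) * δ * ![w.1, w.2.1, w.2.2] 2 - γ * ![w.1, w.2.1, w.2.2] j‖ ≤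
        ‖(k':ℂ) - β * ![w.1, w.2.1, w.2.2] i‖) :
    ∀ x : H, ‖((((k:ℂ) * δ) • P - γ • opEval3 S1 S2 P (X j))) x‖ ≤
      ‖(((k:ℂ) • (1 : H →L[ℂ] H) - β • opEval3 S1 S2 P (X i))) x‖ := by
  have key : ∀ k' : ℝ, 3 < k' → ∀ x : H,
      ‖((((k':ℂ) * δ) • P - γ • opEval3 S1 S2 P (X j))) x‖ ≤
      ‖(((k':ℂ) • (1 : H →L[ℂ] H) - β • opEval3 S1 S2 P (X i))) x‖ := by
    intro k' hk' x
    have hcore := core h hk' i β hβ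
      (monomial (Finsupp.single 2 1) ((k':ℂ) * δ) - monomial (Finsupp.single j 1) γ)
      (fun w hw => by
        have := hscal k' hk' w hw
        rw [map_sub, eval_monomial, eval_monomial,
          Finsupp.prod_single_index (by rw [pow_zero]), Finsupp.prod_single_index
          (by rw [pow_zero]), pow_one, pow_one]
        exact this) x
    have hB : opEval3 S1 S2 P
        (monomial (Finsupp.single 2 1) ((k':ℂ) * δ) - monomial (Finsupp.single j 1) γ) =
        ((k':ℂ) * δ) • P - γ • opEval3 S1 S2 P (X j) := by
      rw [opEval3_sub, opEval3_monomial, opEval3_monomial, X, opEval3_monomial, one_smul]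
      congr 2
      simp [Finsupp.single_apply]
    rw [hB] at hcore
    exact hcore
  intro x
  apply real_le_of_forall_pos
  intro ε hε
  set c : ℝ := ‖x‖ + ‖P x‖ + 1 with hc
  have hc0 : 0 < c := by positivity
  set ε' : ℝ := ε / c with hε'
  have hε'0 : 0 < ε' := by positivity
  set k' : ℝ := k + ε' with hk'def
  have hk' : 3 < k' := by rw [hk'def]; linarith
  have hkey := key k' hk' x
  have e1 : ((((k':ℂ) * δ) • P - γ • opEval3 S1 S2 P (X j))) x =
      ((((k:ℂ) * δ) • P - γ • opEval3 S1 S2 P (X j))) x + ((ε':ℂ) * δ) • P x := by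
    simp only [ContinuousLinearMap.sub_apply, ContinuousLinearMap.smul_apply, hk'def]
    push_cast
    rw [add_mul]
    module
  have e2 : (((k':ℂ) • (1 : H →L[ℂ] H) - β • opEval3 S1 S2 P (X i))) x =
      (((k:ℂ) • (1 : H →L[ℂ] H) - β • opEval3 S1 S2 P (X i))) x + (ε':ℂ) • x := by
    simp only [ContinuousLinearMap.sub_apply, ContinuousLinearMap.smul_apply,
      ContinuousLinearMap.one_apply, hk'def]
    push_cast
    module
  have hεδ : ‖(ε':ℂ) * δ‖ ≤ ε' := by
    rw [norm_mul, Complex.norm_real, Real.norm_eq_abs, abs_of_pos hε'0]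
    calc ε' * ‖δ‖ ≤ ε' * 1 := by gcongr
    _ = ε' := mul_one _
  have hεn : ‖(ε':ℂ)‖ = ε' := by
    rw [Complex.norm_real, Real.norm_eq_abs, abs_of_pos hε'0]
  calc ‖((((k:ℂ) * δ) • P - γ • opEval3 S1 S2 P (X j))) x‖
      = ‖((((k':ℂ) * δ) • P - γ • opEval3 S1 S2 P (X j))) x - ((ε':ℂ) * δ) • P x‖ := by
        rw [e1]; congr 1; abel
  _ ≤ ‖((((k':ℂ) * δ) • P - γ • opEval3 S1 S2 P (X j))) x‖ + ‖((ε':ℂ) * δ) • P x‖ :=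
        norm_sub_le _ _
  _ ≤ ‖(((k':ℂ) • (1 : H →L[ℂ] H) - β • opEval3 S1 S2 P (X i))) x‖ + ε' * ‖P x‖ := by
        gcongr
        rw [norm_smul]
        exact mul_le_mul_of_nonneg_right hεδ (norm_nonneg _)
  _ ≤ (‖(((k:ℂ) • (1 : H →L[ℂ] H) - β • opEval3 S1 S2 P (X i))) x‖ + ε' * ‖x‖) + ε' * ‖P x‖ := by
        gcongr
        rw [e2]
        calc ‖_ + (ε':ℂ) • x‖ ≤ ‖(((k:ℂ) • (1 : H →L[ℂ] H) - β • opEval3 S1 S2 P (X i))) x‖ +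
            ‖(ε':ℂ) • x‖ := norm_add_le _ _
        _ = _ := by rw [norm_smul, hεn]
  _ ≤ ‖(((k:ℂ) • (1 : H →L[ℂ] H) - β • opEval3 S1 S2 P (X i))) x‖ + ε := by
        have : ε' * ‖x‖ + ε' * ‖P x‖ ≤ ε := by
          have : ε' * (‖x‖ + ‖P x‖) ≤ ε' * c := by
            gcongr
            rw [hc]; linarith
          rw [hε'] at this ⊢
          calc ε / c * ‖x‖ + ε / c * ‖P x‖ = ε / c * (‖x‖ + ‖P x‖) := by ring
          _ ≤ ε / c * c := this
          _ = ε := by field_simp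
        linarith
  _ = _ := rfl

lemma isPositive_of_dominates (A B : H →L[ℂ] H) (hBA : ∀ x, ‖B x‖ ≤ ‖A x‖) :
    (star A * A - star B * B).IsPositive := by
  refine ContinuousLinearMap.isPositive_def'.mpr ⟨?_, ?_⟩
  · rw [IsSelfAdjoint, star_sub, star_mul, star_mul, star_star, star_star]
  · intro x
    rw [ContinuousLinearMap.reApplyInnerSelf_apply]
    simp only [ContinuousLinearMap.sub_apply, ContinuousLinearMap.mul_apply]
    rw [inner_sub_left, map_sub]
    have e1 : (inner ℂ ((star A) (A x)) x : ℂ) = inner ℂ (A x) (A x) := by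
      rw [ContinuousLinearMap.star_eq_adjoint, ContinuousLinearMap.adjoint_inner_left]
    have e2 : (inner ℂ ((star B) (B x)) x : ℂ) = inner ℂ (B x) (B x) := by
      rw [ContinuousLinearMap.star_eq_adjoint, ContinuousLinearMap.adjoint_inner_left]
    rw [e1, e2, inner_self_eq_norm_sq, inner_self_eq_norm_sq]
    have := pow_le_pow_left₀ (norm_nonneg (B x)) (hBA x) 2
    linarith

end Final

open MvPolynomial in
theorem gamma3_pencil_positivity
    {H : Type*} [NormedAddCommGroup H] [InnerProductSpace ℂ H] [CompleteSpace H]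
    (S1 S2 P : H →L[ℂ] H) (h : IsGamma3Contraction S1 S2 P)
    (k : ℝ) (hk : 3 ≤ k) (α : ℂ) (hα : ‖α‖ ≤ 1) :
    (star ((k : ℂ) • (1 : H →L[ℂ] H) - α • S1) * ((k : ℂ) • (1 : H →L[ℂ] H) - α • S1) -
      star (((k : ℂ) * α ^ 3) • P - (α ^ 2) • S2) *
        (((k : ℂ) * α ^ 3) • P - (α ^ 2) • S2)).IsPositive ∧
    (star ((k : ℂ) • (1 : H →L[ℂ] H) - (α ^ 2) • S2) *
        ((k : ℂ) • (1 : H →L[ℂ] H) - (α ^ 2) • S2) -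
      star (((k : ℂ) * α ^ 3) • P - α • S1) *
        (((k : ℂ) * α ^ 3) • P - α • S1)).IsPositive := by
  have hX0 : opEval3 S1 S2 P (X 0) = S1 := by simpa using opEval3_X S1 S2 P 0
  have hX1 : opEval3 S1 S2 P (X 1) = S2 := by simpa using opEval3_X S1 S2 P 1
  have hα2 : ‖α ^ 2‖ ≤ 1 := by rw [norm_pow]; exact pow_le_one₀ (norm_nonneg _) hα
  have hα3 : ‖α ^ 3‖ ≤ 1 := by rw [norm_pow]; exact pow_le_one₀ (norm_nonneg _) hα
  have hz : ∀ z : ℂ, ‖z‖ ≤ 1 → ‖α * z‖ ≤ 1 := fun z hz => by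
    rw [norm_mul]; exact mul_le_one₀ hα (norm_nonneg _) hz
  constructor
  · apply isPositive_of_dominates
    intro x
    have key := pencil_half h hk 1 α (α ^ 2) (α ^ 3) hα hα3 0 ?_ x
    · rw [hX0, hX1] at key
      exact key
    · rintro k' hk' w ⟨z1, z2, z3, h1, h2, h3, rfl⟩
      simp only [Matrix.cons_val_zero, Matrix.cons_val_one, Matrix.head_cons,
        Matrix.cons_val_two, Matrix.tail_cons]
      have := scalar1 hk' (α * z1) (α * z2) (α * z3) (hz z1 h1) (hz z2 h2) (hz z3 h3)
      convert this using 2 <;> ring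
  · apply isPositive_of_dominates
    intro x
    have key := pencil_half h hk 0 (α ^ 2) α (α ^ 3) hα2 hα3 1 ?_ x
    · rw [hX0, hX1] at key
      exact key
    · rintro k' hk' w ⟨z1, z2, z3, h1, h2, h3, rfl⟩
      simp only [Matrix.cons_val_zero, Matrix.cons_val_one, Matrix.head_cons,
        Matrix.cons_val_two, Matrix.tail_cons]
      have := scalar2 hk' (α * z1) (α * z2) (α * z3) (hz z1 h1) (hz z2 h2) (hz z3 h3)
      convert this using 2 <;> ring
end

section
/- Let A₁, A₂ be bounded operators on a complex Hilbert space and let c be a real number such that the numerical radius ω(A₁ + zA₂) ≤ c for all z ∈ ℂ with |z| = 1. Then ω(A₁ + zA₂*) ≤ c and ω(A₁* + zA₂) ≤ c for all z ∈ ℂ with |z| = 1. -/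
open ComplexConjugate in
lemma exists_unimodular_norm_add' (a b : ℂ) :
    ∃ z : ℂ, ‖z‖ = 1 ∧ ‖a‖ + ‖b‖ ≤ ‖a + z * b‖ := by
  set sa : ℂ := if a = 0 then 1 else a / ‖a‖ with hsa
  set sb : ℂ := if b = 0 then 1 else b / ‖b‖ with hsb
  have hsan : ‖sa‖ = 1 := by
    rw [hsa]; split_ifs with h
    · simp
    · rw [norm_div]; simp; exact h
  have hsbn : ‖sb‖ = 1 := by
    rw [hsb]; split_ifs with h
    · simp
    · rw [norm_div]; simp; exact h
  refine ⟨sa * conj sb, by rw [norm_mul, hsan, RCLike.norm_conj, hsbn, one_mul], ?_⟩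
  have hzb : conj sb * b = (‖b‖ : ℂ) := by
    rw [hsb]; split_ifs with h
    · simp [h]
    · rw [map_div₀, Complex.conj_ofReal, div_mul_eq_mul_div, Complex.conj_mul']
      rw [sq, mul_div_assoc, div_self (by exact_mod_cast (norm_ne_zero_iff.mpr h)), mul_one]
  have ha : a = sa * ‖a‖ := by
    rw [hsa]; split_ifs with h
    · simp [h]
    · rw [div_mul_cancel₀]
      exact_mod_cast (norm_ne_zero_iff.mpr h)
  have key : a + sa * conj sb * b = sa * (‖a‖ + ‖b‖) := by
    rw [mul_add, mul_assoc, hzb]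
    nth_rewrite 1 [ha]; ring
  rw [key, norm_mul, hsan, one_mul, ← Complex.ofReal_add, Complex.norm_real,
    Real.norm_eq_abs, abs_of_nonneg (by positivity)]

lemma numRadius_bddAbove' {H : Type*} [NormedAddCommGroup H] [InnerProductSpace ℂ H]
    [CompleteSpace H] (A : H →L[ℂ] H) :
    BddAbove (Set.range fun x : {x : H // ‖x‖ = 1} => ‖(inner ℂ (A x.1) x.1 : ℂ)‖) := by
  refine ⟨‖A‖, ?_⟩
  rintro r ⟨⟨x, hx⟩, rfl⟩
  calc ‖(inner ℂ (A x) x : ℂ)‖ ≤ ‖A x‖ * ‖x‖ := norm_inner_le_norm _ _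
    _ ≤ ‖A‖ * ‖x‖ * ‖x‖ := by gcongr; exact A.le_opNorm x
    _ = ‖A‖ := by rw [hx]; ring

lemma inner_le_numRadius' {H : Type*} [NormedAddCommGroup H] [InnerProductSpace ℂ H]
    [CompleteSpace H] (A : H →L[ℂ] H) (x : H) (hx : ‖x‖ = 1) :
    ‖(inner ℂ (A x) x : ℂ)‖ ≤ numRadius A :=
  le_ciSup (numRadius_bddAbove' A) (⟨x, hx⟩ : {x : H // ‖x‖ = 1})

lemma numRadius_le' {H : Type*} [NormedAddCommGroup H] [InnerProductSpace ℂ H]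
    [CompleteSpace H] (A : H →L[ℂ] H) (c : ℝ) (hc : 0 ≤ c)
    (hb : ∀ x : H, ‖x‖ = 1 → ‖(inner ℂ (A x) x : ℂ)‖ ≤ c) : numRadius A ≤ c := by
  unfold numRadius
  rcases isEmpty_or_nonempty {x : H // ‖x‖ = 1} with he | hn
  · rw [Real.iSup_of_isEmpty]; exact hc
  · exact ciSup_le fun x => hb x.1 x.2


theorem numRadius_adjoint_bound
    {H : Type*} [NormedAddCommGroup H] [InnerProductSpace ℂ H] [CompleteSpace H]
    (A1 A2 : H →L[ℂ] H) (c : ℝ)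
    (h : ∀ z : ℂ, ‖z‖ = 1 → numRadius (A1 + z • A2) ≤ c) :
    (∀ z : ℂ, ‖z‖ = 1 → numRadius (A1 + z • star A2) ≤ c) ∧
    (∀ z : ℂ, ‖z‖ = 1 → numRadius (star A1 + z • A2) ≤ c) := by
  have hc : 0 ≤ c := by
    refine le_trans ?_ (h 1 (by simp))
    unfold numRadius
    exact Real.iSup_nonneg fun x => norm_nonneg _
  have key : ∀ x : H, ‖x‖ = 1 →
      ‖(inner ℂ (A1 x) x : ℂ)‖ + ‖(inner ℂ (A2 x) x : ℂ)‖ ≤ c := by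
    intro x hx
    obtain ⟨z, hz, hle⟩ :=
      exists_unimodular_norm_add' (inner ℂ (A1 x) x : ℂ) (inner ℂ (A2 x) x : ℂ)
    refine le_trans hle ?_
    have hcz : ‖(starRingEnd ℂ) z‖ = 1 := by rwa [RCLike.norm_conj]
    have heq : (inner ℂ ((A1 + (starRingEnd ℂ) z • A2) x) x : ℂ)
        = (inner ℂ (A1 x) x : ℂ) + z * (inner ℂ (A2 x) x : ℂ) := by
      simp [inner_add_left, inner_smul_left]; ring
    rw [← heq]
    exact le_trans (inner_le_numRadius' _ x hx) (h _ hcz)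
  have hstar : ∀ (B : H →L[ℂ] H) (x : H),
      (inner ℂ ((star B) x) x : ℂ) = (starRingEnd ℂ) (inner ℂ (B x) x : ℂ) := by
    intro B x
    rw [ContinuousLinearMap.star_eq_adjoint, ContinuousLinearMap.adjoint_inner_left,
      ← inner_conj_symm]
  constructor
  · intro z hz
    refine numRadius_le' _ c hc fun x hx => ?_
    have heq : (inner ℂ ((A1 + z • star A2) x) x : ℂ)
        = (inner ℂ (A1 x) x : ℂ) + (starRingEnd ℂ) z * (starRingEnd ℂ) (inner ℂ (A2 x) x : ℂ) := by
      simp [inner_add_left, inner_smul_left, hstar A2 x]; ring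
    rw [heq]
    calc ‖(inner ℂ (A1 x) x : ℂ) + (starRingEnd ℂ) z * (starRingEnd ℂ) (inner ℂ (A2 x) x : ℂ)‖
        ≤ ‖(inner ℂ (A1 x) x : ℂ)‖ + ‖(starRingEnd ℂ) z * (starRingEnd ℂ) (inner ℂ (A2 x) x : ℂ)‖ :=
          norm_add_le _ _
      _ = ‖(inner ℂ (A1 x) x : ℂ)‖ + ‖(inner ℂ (A2 x) x : ℂ)‖ := by
          rw [norm_mul, RCLike.norm_conj, RCLike.norm_conj, hz, one_mul]
      _ ≤ c := key x hx
  · intro z hz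
    refine numRadius_le' _ c hc fun x hx => ?_
    have heq : (inner ℂ ((star A1 + z • A2) x) x : ℂ)
        = (starRingEnd ℂ) (inner ℂ (A1 x) x : ℂ) + (starRingEnd ℂ) z * (inner ℂ (A2 x) x : ℂ) := by
      simp [inner_add_left, inner_smul_left, hstar A1 x]; ring
    rw [heq]
    calc ‖(starRingEnd ℂ) (inner ℂ (A1 x) x : ℂ) + (starRingEnd ℂ) z * (inner ℂ (A2 x) x : ℂ)‖
        ≤ ‖(starRingEnd ℂ) (inner ℂ (A1 x) x : ℂ)‖ + ‖(starRingEnd ℂ) z * (inner ℂ (A2 x) x : ℂ)‖ :=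
          norm_add_le _ _
      _ = ‖(inner ℂ (A1 x) x : ℂ)‖ + ‖(inner ℂ (A2 x) x : ℂ)‖ := by
          rw [norm_mul, RCLike.norm_conj, RCLike.norm_conj, hz, one_mul]
      _ ≤ c := key x hx
end

section
/- Let A₁, A₂ be bounded operators on a complex Hilbert space. The following are equivalent: (i) (A₁,A₂) is almost normal; (ii) A₁* + zA₂ and A₂* + zA₁ commute for every z ∈ ℂ with |z| = 1; (iii) A₂* + zA₁ is a normal operator for every z ∈ ℂ with |z| = 1; (iv) A₁* + zA₂ is a normal operator for every z ∈ ℂ with |z| = 1. -/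
open ComplexConjugate

section AuxAN

private lemma an_unit_solve {M : Type*} [AddCommGroup M] [Module ℂ M] {E C D : M}
    (h : ∀ z : ℂ, ‖z‖ = 1 → E + z • C + (conj z) • D = 0) :
    E = 0 ∧ C = 0 ∧ D = 0 := by
  have h1 := h 1 (by simp)
  have h2 := h (-1) (by simp)
  have hi := h Complex.I (by simp)
  simp only [one_smul, map_one, map_neg, neg_smul, Complex.conj_I] at h1 h2 hi
  have hE : E = 0 := by
    have hEE : (2:ℂ) • E = 0 := by
      rw [two_smul]
      calc E + E = (E + C + D) + (E + -C + -D) := by abel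
        _ = 0 := by rw [h1, h2, add_zero]
    rcases smul_eq_zero.mp hEE with h | h
    · exact absurd h two_ne_zero
    · exact h
  rw [hE, zero_add] at h1 hi
  have hCD : C = D := by
    have : Complex.I • (C - D) = 0 := by
      rw [smul_sub]
      calc Complex.I • C - Complex.I • D = Complex.I • C + -(Complex.I • D) := by abel
        _ = 0 := hi
    rcases smul_eq_zero.mp this with h | h
    · exact absurd h Complex.I_ne_zero
    · exact sub_eq_zero.mp h
  have hC : C = 0 := by
    have : (2:ℂ) • C = 0 := by
      rw [two_smul]
      calc C + C = C + D := by rw [hCD]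
        _ = 0 := h1
    rcases smul_eq_zero.mp this with h | h
    · exact absurd h two_ne_zero
    · exact h
  exact ⟨hE, hC, hCD ▸ hC⟩

variable {R : Type*} [Ring R] [StarRing R] [Module ℂ R] [StarModule ℂ R]
  [SMulCommClass ℂ R R] [IsScalarTower ℂ R R] (A1 A2 : R)

private lemma an_id3 (z : ℂ) (hz : conj z * z = 1) :
    star (star A2 + z • A1) * (star A2 + z • A1) - (star A2 + z • A1) * star (star A2 + z • A1)
      = (star A1 * A1 - A1 * star A1 - (star A2 * A2 - A2 * star A2))
        + z • (A2 * A1 - A1 * A2) + conj z • star (A2 * A1 - A1 * A2) := by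
  have hz' : z * conj z = 1 := by rw [mul_comm]; exact hz
  simp only [star_add, star_sub, star_smul, star_mul, star_star, Complex.star_def, mul_add,
    add_mul, smul_add, smul_sub, smul_smul, smul_mul_assoc, mul_smul_comm, hz, hz', one_smul,
    neg_add, neg_sub, neg_neg]
  abel

private lemma an_id4 (z : ℂ) (hz : conj z * z = 1) :
    star (star A1 + z • A2) * (star A1 + z • A2) - (star A1 + z • A2) * star (star A1 + z • A2)
      = -((star A1 * A1 - A1 * star A1 - (star A2 * A2 - A2 * star A2))
        + z • (A2 * A1 - A1 * A2) + conj z • star (A2 * A1 - A1 * A2)) := by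
  have hz' : z * conj z = 1 := by rw [mul_comm]; exact hz
  simp only [star_add, star_sub, star_smul, star_mul, star_star, Complex.star_def, mul_add,
    add_mul, smul_add, smul_sub, smul_smul, smul_mul_assoc, mul_smul_comm, hz, hz', one_smul,
    neg_add, neg_sub, neg_neg]
  abel

private lemma an_id2 (z : ℂ) (hz : conj z * z = 1) :
    (star A1 + z • A2) * (star A2 + z • A1) - (star A2 + z • A1) * (star A1 + z • A2)
      = z • ((star A1 * A1 - A1 * star A1 - (star A2 * A2 - A2 * star A2))
        + z • (A2 * A1 - A1 * A2) + conj z • star (A2 * A1 - A1 * A2)) := by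
  have hz' : z * conj z = 1 := by rw [mul_comm]; exact hz
  simp only [star_add, star_sub, star_smul, star_mul, star_star, Complex.star_def, mul_add,
    add_mul, smul_add, smul_sub, smul_smul, smul_mul_assoc, mul_smul_comm, hz, hz', one_smul,
    neg_add, neg_sub, neg_neg]
  abel

private lemma an_conj_mul {z : ℂ} (h : ‖z‖ = 1) : conj z * z = 1 := by
  rw [← Complex.normSq_eq_conj_mul_self]
  norm_cast
  rw [Complex.normSq_eq_norm_sq, h, one_pow]

end AuxAN

section AuxAN2
variable {R : Type*} [Ring R] [StarRing R] [Module ℂ R] [StarModule ℂ R]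
  [SMulCommClass ℂ R R] [IsScalarTower ℂ R R] (A1 A2 : R)

private lemma an_p2 {z : ℂ} (h1 : conj z * z = 1) (hz0 : z ≠ 0) :
    Commute (star A1 + z • A2) (star A2 + z • A1) ↔
      (star A1 * A1 - A1 * star A1 - (star A2 * A2 - A2 * star A2))
        + z • (A2 * A1 - A1 * A2) + conj z • star (A2 * A1 - A1 * A2) = 0 := by
  constructor
  · intro h0
    have h2 : z • ((star A1 * A1 - A1 * star A1 - (star A2 * A2 - A2 * star A2))
        + z • (A2 * A1 - A1 * A2) + conj z • star (A2 * A1 - A1 * A2)) = 0 := by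
      rw [← an_id2 A1 A2 z h1, sub_eq_zero]; exact h0
    rcases smul_eq_zero.mp h2 with h | h
    · exact absurd h hz0
    · exact h
  · intro h0
    have h2 : (star A1 + z • A2) * (star A2 + z • A1)
        - (star A2 + z • A1) * (star A1 + z • A2) = 0 := by
      rw [an_id2 A1 A2 z h1, h0, smul_zero]
    exact sub_eq_zero.mp h2

private lemma an_p3 {z : ℂ} (h1 : conj z * z = 1) :
    IsStarNormal (star A2 + z • A1) ↔
      (star A1 * A1 - A1 * star A1 - (star A2 * A2 - A2 * star A2))
        + z • (A2 * A1 - A1 * A2) + conj z • star (A2 * A1 - A1 * A2) = 0 := by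
  constructor
  · intro h0
    rw [← an_id3 A1 A2 z h1, sub_eq_zero]
    exact h0.star_comm_self
  · intro h0
    refine ⟨?_⟩
    have h2 : star (star A2 + z • A1) * (star A2 + z • A1)
        - (star A2 + z • A1) * star (star A2 + z • A1) = 0 := by
      rw [an_id3 A1 A2 z h1, h0]
    exact sub_eq_zero.mp h2

private lemma an_p4 {z : ℂ} (h1 : conj z * z = 1) :
    IsStarNormal (star A1 + z • A2) ↔
      (star A1 * A1 - A1 * star A1 - (star A2 * A2 - A2 * star A2))
        + z • (A2 * A1 - A1 * A2) + conj z • star (A2 * A1 - A1 * A2) = 0 := by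
  constructor
  · intro h0
    rw [← neg_eq_zero, ← an_id4 A1 A2 z h1, sub_eq_zero]
    exact h0.star_comm_self
  · intro h0
    refine ⟨?_⟩
    have h2 : star (star A1 + z • A2) * (star A1 + z • A2)
        - (star A1 + z • A2) * star (star A1 + z • A2) = 0 := by
      rw [an_id4 A1 A2 z h1, h0, neg_zero]
    exact sub_eq_zero.mp h2

end AuxAN2

theorem almostNormal_iff_characterizations'
    {H : Type*} [NormedAddCommGroup H] [InnerProductSpace ℂ H] [CompleteSpace H]
    (A1 A2 : H →L[ℂ] H) :
    ((Commute A1 A2 ∧ star A1 * A1 - A1 * star A1 = star A2 * A2 - A2 * star A2) ↔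
      ∀ z : ℂ, ‖z‖ = 1 → Commute (star A1 + z • A2) (star A2 + z • A1)) ∧
    ((Commute A1 A2 ∧ star A1 * A1 - A1 * star A1 = star A2 * A2 - A2 * star A2) ↔ ∀ z : ℂ, ‖z‖ = 1 → IsStarNormal (star A2 + z • A1)) ∧
    ((Commute A1 A2 ∧ star A1 * A1 - A1 * star A1 = star A2 * A2 - A2 * star A2) ↔ ∀ z : ℂ, ‖z‖ = 1 → IsStarNormal (star A1 + z • A2)) := by
  have hP : (Commute A1 A2 ∧ star A1 * A1 - A1 * star A1 = star A2 * A2 - A2 * star A2) ↔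
      ∀ z : ℂ, ‖z‖ = 1 →
        (star A1 * A1 - A1 * star A1 - (star A2 * A2 - A2 * star A2))
          + z • (A2 * A1 - A1 * A2) + conj z • star (A2 * A1 - A1 * A2) = 0 := by
    constructor
    · rintro ⟨hcomm, heq⟩
      have hC0 : A2 * A1 - A1 * A2 = 0 := sub_eq_zero.mpr hcomm.symm
      have hE0 : star A1 * A1 - A1 * star A1 - (star A2 * A2 - A2 * star A2) = 0 :=
        sub_eq_zero.mpr heq
      intro z hz
      rw [hC0, hE0, star_zero, smul_zero, smul_zero, add_zero, add_zero]
    · intro h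
      obtain ⟨hE0, hC0, -⟩ := an_unit_solve h
      exact ⟨(sub_eq_zero.mp hC0).symm, sub_eq_zero.mp hE0⟩
  have hz' : ∀ z : ℂ, ‖z‖ = 1 → z ≠ 0 := by
    intro z hz e; rw [e] at hz; simp at hz
  refine ⟨hP.trans ?_, hP.trans ?_, hP.trans ?_⟩
  · exact (forall₂_congr fun z hz => (an_p2 A1 A2 (an_conj_mul hz) (hz' z hz)).symm)
  · exact (forall₂_congr fun z hz => (an_p3 A1 A2 (an_conj_mul hz)).symm)
  · exact (forall₂_congr fun z hz => (an_p4 A1 A2 (an_conj_mul hz)).symm)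

theorem almostNormal_iff_characterizations
    {H : Type*} [NormedAddCommGroup H] [InnerProductSpace ℂ H] [CompleteSpace H]
    (A1 A2 : H →L[ℂ] H) :
    (AlmostNormal A1 A2 ↔
      ∀ z : ℂ, ‖z‖ = 1 → Commute (star A1 + z • A2) (star A2 + z • A1)) ∧
    (AlmostNormal A1 A2 ↔ ∀ z : ℂ, ‖z‖ = 1 → IsStarNormal (star A2 + z • A1)) ∧
    (AlmostNormal A1 A2 ↔ ∀ z : ℂ, ‖z‖ = 1 → IsStarNormal (star A1 + z • A2)) := by
  exact almostNormal_iff_characterizations' A1 A2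
end

section
/- Let T be a contraction on a complex Hilbert space H and let V, acting on a Hilbert space K containing H as a closed subspace, be a minimal isometric dilation of T. Then there is a unitary operator from 𝒟_{T*} onto 𝒟_{V*}; in particular, the defect spaces of T* and V* have the same dimension. -/
open scoped InnerProductSpace in
lemma aux_inner_one_sub_mul_star {E : Type*} [NormedAddCommGroup E] [InnerProductSpace ℂ E]
    [CompleteSpace E] (A : E →L[ℂ] E) (x : E) :
    ⟪(1 - A * star A) x, x⟫_ℂ = ⟪x, x⟫_ℂ - ⟪star A x, star A x⟫_ℂ := by
  have h := ContinuousLinearMap.adjoint_inner_left (ContinuousLinearMap.adjoint A)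
      (x := x) (y := ContinuousLinearMap.adjoint A x)
  rw [ContinuousLinearMap.adjoint_adjoint] at h
  simp only [ContinuousLinearMap.sub_apply, ContinuousLinearMap.one_apply,
    ContinuousLinearMap.mul_apply, inner_sub_left, ContinuousLinearMap.star_eq_adjoint]
  rw [h]

open scoped InnerProductSpace in
lemma aux_defect_nonneg {E : Type*} [NormedAddCommGroup E] [InnerProductSpace ℂ E]
    [CompleteSpace E] (A : E →L[ℂ] E) (hA : ‖A‖ ≤ 1) :
    (0 : E →L[ℂ] E) ≤ 1 - A * star A := by
  rw [ContinuousLinearMap.nonneg_iff_isPositive]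
  refine ⟨?_, fun x => ?_⟩
  · rw [← ContinuousLinearMap.isSelfAdjoint_iff_isSymmetric]; show star _ = _
    simp [star_sub, star_mul, star_star]
  · rw [ContinuousLinearMap.reApplyInnerSelf_apply, aux_inner_one_sub_mul_star, map_sub,
      inner_self_eq_norm_sq, inner_self_eq_norm_sq]
    have h1 : ‖star A x‖ ≤ ‖x‖ := by
      calc ‖star A x‖ ≤ ‖star A‖ * ‖x‖ := (star A).le_opNorm x
        _ ≤ 1 * ‖x‖ := by gcongr; rwa [norm_star]
        _ = ‖x‖ := one_mul _
    have h2 := pow_le_pow_left₀ (norm_nonneg _) h1 2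
    linarith

open scoped InnerProductSpace in
lemma aux_norm_eq_of_inner {E F : Type*} [NormedAddCommGroup E] [InnerProductSpace ℂ E]
    [NormedAddCommGroup F] [InnerProductSpace ℂ F] {x : E} {y : F}
    (h : ⟪x, x⟫_ℂ = ⟪y, y⟫_ℂ) : ‖x‖ = ‖y‖ := by
  rw [norm_eq_sqrt_re_inner (𝕜 := ℂ) x, norm_eq_sqrt_re_inner (𝕜 := ℂ) y, h]

set_option maxHeartbeats 1000000 in
set_option synthInstance.maxHeartbeats 1000000 in
open scoped InnerProductSpace in
theorem defect_spaces_of_minimal_isometric_dilation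
    {H : Type*} [NormedAddCommGroup H] [InnerProductSpace ℂ H] [CompleteSpace H]
    {K : Type*} [NormedAddCommGroup K] [InnerProductSpace ℂ K] [CompleteSpace K]
    (T : H →L[ℂ] H) (hT : ‖T‖ ≤ 1) (V : K →L[ℂ] K) (ι : H →ₗᵢ[ℂ] K)
    (hV : ∀ x, ‖V x‖ = ‖x‖)
    (hdil : ∀ n : ℕ, ContinuousLinearMap.adjoint ι.toContinuousLinearMap ∘L
        ((V ^ n) ∘L ι.toContinuousLinearMap) = T ^ n)
    (hmin : (Submodule.span ℂ
        {x : K | ∃ (n : ℕ) (h : H), x = (V ^ n) (ι h)}).topologicalClosure = ⊤) :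
    Nonempty ((defectSpace (star T)) ≃ₗᵢ[ℂ] (defectSpace (star V))) := by
  classical
  set ιL : H →L[ℂ] K := ι.toContinuousLinearMap with hιLdef
  have hιco : ∀ a : H, ι a = ιL a := fun _ => rfl
  have hιin : ∀ a b : H, ⟪ιL a, ιL b⟫_ℂ = ⟪a, b⟫_ℂ := fun a b => ι.inner_map_map a b
  have hVin : ∀ x y : K, ⟪V x, V y⟫_ℂ = ⟪x, y⟫_ℂ := fun x y =>
    LinearIsometry.inner_map_map ⟨(V : K →ₗ[ℂ] K), hV⟩ x y
  -- V is an isometry: star V * V = 1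
  have hVV : star V * V = 1 := by
    ext x
    refine ext_inner_left ℂ fun y => ?_
    rw [ContinuousLinearMap.mul_apply, ContinuousLinearMap.star_eq_adjoint,
      ContinuousLinearMap.adjoint_inner_right, hVin, ContinuousLinearMap.one_apply]
  have hdil' : ∀ (n : ℕ) (g : H),
      (ContinuousLinearMap.adjoint ιL) ((V ^ n) (ιL g)) = (T ^ n) g := by
    intro n g
    have := ContinuousLinearMap.ext_iff.mp (hdil n) g
    simpa [ContinuousLinearMap.comp_apply] using this
  -- intertwining relation for adjoints
  have hspan := Submodule.topologicalClosure_eq_top_iff.mp hmin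
  have hVadj : ∀ h : H, (ContinuousLinearMap.adjoint V) (ιL h) =
      ιL ((ContinuousLinearMap.adjoint T) h) := by
    intro h
    have hu : (ContinuousLinearMap.adjoint V) (ιL h) - ιL ((ContinuousLinearMap.adjoint T) h)
        ∈ (Submodule.span ℂ {x : K | ∃ (n : ℕ) (g : H), x = (V ^ n) (ι g)})ᗮ := by
      rw [Submodule.mem_orthogonal]
      intro u hu
      induction hu using Submodule.span_induction with
      | mem x hx =>
        obtain ⟨n, gH, rfl⟩ := hx
        simp only [hιco]
        rw [inner_sub_right]
        have e1 : ⟪(V ^ n) (ιL gH), (ContinuousLinearMap.adjoint V) (ιL h)⟫_ℂ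
            = ⟪(T ^ (n + 1)) gH, h⟫_ℂ := by
          rw [ContinuousLinearMap.adjoint_inner_right]
          have hs : V ((V ^ n) (ιL gH)) = (V ^ (n + 1)) (ιL gH) := by
            rw [pow_succ', ContinuousLinearMap.mul_apply]
          rw [hs, ← ContinuousLinearMap.adjoint_inner_left, hdil' (n + 1) gH]
        have e2 : ⟪(V ^ n) (ιL gH), ιL ((ContinuousLinearMap.adjoint T) h)⟫_ℂ
            = ⟪(T ^ (n + 1)) gH, h⟫_ℂ := by
          rw [← ContinuousLinearMap.adjoint_inner_left, hdil' n gH,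
            ContinuousLinearMap.adjoint_inner_right, ← ContinuousLinearMap.mul_apply,
            ← pow_succ']
        rw [e1, e2, sub_self]
      | zero => simp
      | add x y hx hy ihx ihy => rw [inner_add_left, ihx, ihy, add_zero]
      | smul c x hx ih => rw [inner_smul_left, ih, mul_zero]
    rw [hspan, Submodule.mem_bot] at hu
    exact sub_eq_zero.mp hu
  -- defect operators
  have hTpos : (0 : H →L[ℂ] H) ≤ 1 - T * star T := aux_defect_nonneg T hT
  have hVnorm : ‖V‖ ≤ 1 :=
    ContinuousLinearMap.opNorm_le_bound _ zero_le_one fun x => by rw [hV, one_mul]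
  set E : K →L[ℂ] K := 1 - V * star V with hEdef
  have hEpos : (0 : K →L[ℂ] K) ≤ E := aux_defect_nonneg V hVnorm
  have hDdef : defectOp (star T) = CFC.sqrt (1 - T * star T) := by
    unfold defectOp; rw [star_star]
  have hD2 : defectOp (star T) * defectOp (star T) = 1 - T * star T := by
    rw [hDdef]; exact CFC.sqrt_mul_sqrt_self _ hTpos
  have hDpos : (0 : H →L[ℂ] H) ≤ defectOp (star T) := hDdef ▸ CFC.sqrt_nonneg _
  have hDsa : ContinuousLinearMap.adjoint (defectOp (star T)) = defectOp (star T) := by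
    have h1 := ((ContinuousLinearMap.nonneg_iff_isPositive _).mp hDpos).isSelfAdjoint
    rwa [IsSelfAdjoint, ContinuousLinearMap.star_eq_adjoint] at h1
  have hEmul : E * E = E := by
    have h1 : (V * star V) * (V * star V) = V * star V := by
      rw [mul_assoc, ← mul_assoc (star V) V (star V), hVV, one_mul]
    rw [hEdef, sub_mul, one_mul, mul_sub, mul_one, h1]
    abel
  have hEeq : defectOp (star V) = E := by
    unfold defectOp; rw [star_star, ← hEdef]
    exact CFC.sqrt_unique hEmul hEpos
  have hEsa : ContinuousLinearMap.adjoint E = E := by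
    have h1 := ((ContinuousLinearMap.nonneg_iff_isPositive _).mp hEpos).isSelfAdjoint
    rwa [IsSelfAdjoint, ContinuousLinearMap.star_eq_adjoint] at h1
  -- the key norm identity
  have hkey : ∀ h : H, ‖E (ιL h)‖ = ‖defectOp (star T) h‖ := by
    intro h
    apply aux_norm_eq_of_inner
    have e1 : ⟪E (ιL h), E (ιL h)⟫_ℂ = ⟪ιL h, ιL h⟫_ℂ -
        ⟪(ContinuousLinearMap.adjoint V) (ιL h), (ContinuousLinearMap.adjoint V) (ιL h)⟫_ℂ := by
      have h1 := ContinuousLinearMap.adjoint_inner_left E (x := ιL h) (y := E (ιL h))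
      rw [hEsa] at h1
      have h2 : E (E (ιL h)) = E (ιL h) := by
        rw [← ContinuousLinearMap.mul_apply, hEmul]
      rw [h2] at h1
      rw [← h1, hEdef, aux_inner_one_sub_mul_star, ContinuousLinearMap.star_eq_adjoint]
    have e2 : ⟪defectOp (star T) h, defectOp (star T) h⟫_ℂ = ⟪h, h⟫_ℂ -
        ⟪(ContinuousLinearMap.adjoint T) h, (ContinuousLinearMap.adjoint T) h⟫_ℂ := by
      have h1 := ContinuousLinearMap.adjoint_inner_left (defectOp (star T)) (x := h)
        (y := defectOp (star T) h)
      rw [hDsa] at h1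
      have h2 : defectOp (star T) (defectOp (star T) h) = (1 - T * star T) h := by
        rw [← ContinuousLinearMap.mul_apply, hD2]
      rw [h2] at h1
      rw [← h1, aux_inner_one_sub_mul_star, ContinuousLinearMap.star_eq_adjoint]
    rw [e1, e2, hVadj h, hιin, hιin]
  -- definitions of the spaces and maps
  have hMdef : defectSpace (star T) =
      (LinearMap.range ((defectOp (star T)).toLinearMap)).topologicalClosure := by
    unfold defectSpace
    congr 1
  have hNdef : defectSpace (star V) = (LinearMap.range (E : K →ₗ[ℂ] K)).topologicalClosure := by
    unfold defectSpace; rw [hEeq]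
  have hMc : IsClosed ((defectSpace (star T) : Submodule ℂ H) : Set H) := by
    rw [hMdef]; exact Submodule.isClosed_topologicalClosure _
  have hNc : IsClosed ((defectSpace (star V) : Submodule ℂ K) : Set K) := by
    rw [hNdef]; exact Submodule.isClosed_topologicalClosure _
  haveI : CompleteSpace (defectSpace (star T)) := hMc.completeSpace_coe
  haveI : CompleteSpace (defectSpace (star V)) := hNc.completeSpace_coe
  have hmemN : ∀ h : H, E (ιL h) ∈ defectSpace (star V) := by
    intro h
    rw [hNdef]
    exact Submodule.le_topologicalClosure _ (LinearMap.mem_range.mpr ⟨ιL h, rfl⟩)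
  set Dl : H →ₗ[ℂ] H := (defectOp (star T)).toLinearMap with hDl
  let ψ : H →ₗ[ℂ] (defectSpace (star V)) :=
    LinearMap.codRestrict (defectSpace (star V)) ((E ∘L ιL).toLinearMap) fun h => hmemN h
  have hψnorm : ∀ h : H, ‖ψ h‖ = ‖defectOp (star T) h‖ := fun h => hkey h
  have hkerle : LinearMap.ker Dl ≤ LinearMap.ker ψ := by
    intro h hh
    rw [LinearMap.mem_ker] at hh ⊢
    have h0 : ‖ψ h‖ = 0 := by
      rw [hψnorm h]
      have : defectOp (star T) h = 0 := hh
      rw [this, norm_zero]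
    simpa using h0
  let g0 : (H ⧸ LinearMap.ker Dl) →ₗ[ℂ] (defectSpace (star V)) :=
    Submodule.liftQ _ ψ hkerle
  let g : LinearMap.range Dl →ₗ[ℂ] (defectSpace (star V)) :=
    g0.comp (Dl.quotKerEquivRange.symm : _ →ₗ[ℂ] _)
  have hg : ∀ h : H, g ⟨Dl h, LinearMap.mem_range_self _ h⟩ = ψ h := by
    intro h
    show g0 (Dl.quotKerEquivRange.symm ⟨Dl h, _⟩) = ψ h
    rw [LinearMap.quotKerEquivRange_symm_apply_image]
    exact Submodule.liftQ_apply _ ψ h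
  have hgnorm : ∀ x : LinearMap.range Dl, ‖g x‖ = ‖x‖ := by
    rintro ⟨x, hx⟩
    obtain ⟨h, rfl⟩ := hx
    show ‖g ⟨Dl h, LinearMap.mem_range_self _ h⟩‖ = _
    rw [hg h, hψnorm h]
    rfl
  let gI : LinearMap.range Dl →ₗᵢ[ℂ] (defectSpace (star V)) := ⟨g, hgnorm⟩
  have hRle : LinearMap.range Dl ≤ defectSpace (star T) := by
    rw [hMdef]; exact Submodule.le_topologicalClosure _
  let eI : LinearMap.range Dl →ₗᵢ[ℂ] (defectSpace (star T)) :=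
    ⟨Submodule.inclusion hRle, fun x => rfl⟩
  set e := eI.toContinuousLinearMap with hedef
  have hdense : DenseRange e := by
    intro x
    rw [closure_subtype]
    have himg : (Subtype.val '' Set.range ⇑e) = ((LinearMap.range Dl : Submodule ℂ H) : Set H) := by
      ext y
      constructor
      · rintro ⟨z, ⟨r, rfl⟩, rfl⟩
        exact r.2
      · intro hy
        exact ⟨e ⟨y, hy⟩, ⟨⟨y, hy⟩, rfl⟩, rfl⟩
    rw [himg]
    exact hMdef.le x.2
  have h_e : IsUniformInducing e := eI.isometry.isUniformInducing
  set Fc := ContinuousLinearMap.extend gI.toContinuousLinearMap e with hFc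
  have hFe : ∀ r, Fc (e r) = gI r := fun r =>
    ContinuousLinearMap.extend_eq gI.toContinuousLinearMap hdense h_e r
  have hFnorm : ∀ x, ‖Fc x‖ = ‖x‖ := by
    intro x
    refine hdense.induction_on x ?_ fun r => ?_
    · exact isClosed_eq (continuous_norm.comp Fc.continuous) continuous_norm
    · rw [hFe r]
      calc ‖gI r‖ = ‖r‖ := gI.norm_map r
        _ = ‖e r‖ := (eI.norm_map r).symm
  let Fi : (defectSpace (star T)) →ₗᵢ[ℂ] (defectSpace (star V)) := ⟨Fc.toLinearMap, hFnorm⟩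
  have hclosed : IsClosed (Set.range ⇑Fi) := Fi.isometry.isClosedEmbedding.isClosed_range
  have hEV0 : ∀ (n : ℕ) (w : K), E ((V ^ (n + 1)) w) = 0 := by
    intro n w
    have hop : E * V ^ (n + 1) = 0 := by
      have h1 : (V * star V) * V ^ (n + 1) = V ^ (n + 1) := by
        rw [pow_succ' V n, ← mul_assoc, mul_assoc V (star V) V, hVV, mul_one]
      rw [hEdef, sub_mul, one_mul, h1, sub_self]
    calc E ((V ^ (n + 1)) w) = (E * V ^ (n + 1)) w := rfl
      _ = 0 := by rw [hop]; rfl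
  have hmap : Submodule.map (E : K →ₗ[ℂ] K)
      (Submodule.span ℂ {x : K | ∃ (n : ℕ) (g : H), x = (V ^ n) (ι g)})
      ≤ LinearMap.range ((E ∘L ιL).toLinearMap) := by
    rw [Submodule.map_span]
    refine Submodule.span_le.mpr ?_
    rintro _ ⟨_, ⟨n, gH, rfl⟩, rfl⟩
    cases n with
    | zero =>
      refine LinearMap.mem_range.mpr ⟨gH, ?_⟩
      show E (ιL gH) = (E : K →ₗ[ℂ] K) ((V ^ 0) (ι gH))
      rw [hιco, pow_zero]
      rfl
    | succ n =>
      have h0 : (E : K →ₗ[ℂ] K) ((V ^ (n + 1)) (ι gH)) = 0 := hEV0 n _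
      rw [h0]
      exact Submodule.zero_mem _
  have hsub : ((LinearMap.range (E : K →ₗ[ℂ] K) : Submodule ℂ K) : Set K) ⊆
      closure ((LinearMap.range ((E ∘L ιL).toLinearMap) : Submodule ℂ K) : Set K) := by
    rintro _ ⟨k, rfl⟩
    have hk : k ∈ closure ((Submodule.span ℂ
        {x : K | ∃ (n : ℕ) (g : H), x = (V ^ n) (ι g)} : Submodule ℂ K) : Set K) := by
      rw [← Submodule.topologicalClosure_coe, hmin]
      trivial
    have h2 : E k ∈ ⇑E '' closure ((Submodule.span ℂ
        {x : K | ∃ (n : ℕ) (g : H), x = (V ^ n) (ι g)} : Submodule ℂ K) : Set K) :=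
      Set.mem_image_of_mem _ hk
    have h3 := (image_closure_subset_closure_image E.continuous) h2
    refine closure_mono ?_ h3
    rintro _ ⟨w, hw, rfl⟩
    exact hmap (Submodule.mem_map_of_mem hw)
  have hψrange : ∀ h : H, ψ h ∈ Set.range ⇑Fi := by
    intro h
    refine ⟨e ⟨Dl h, LinearMap.mem_range_self _ h⟩, ?_⟩
    show Fc (e _) = ψ h
    rw [hFe]
    exact hg h
  have hsurj : Function.Surjective Fi := by
    intro y
    have h1 : (y : K) ∈ closure ((LinearMap.range (E : K →ₗ[ℂ] K) : Submodule ℂ K) : Set K) := by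
      exact hNdef.le y.2
    have hy2 : (y : K) ∈
        closure ((LinearMap.range ((E ∘L ιL).toLinearMap) : Submodule ℂ K) : Set K) :=
      closure_minimal hsub isClosed_closure h1
    have h4 : y ∈ closure (Set.range ⇑Fi) := by
      rw [closure_subtype]
      refine closure_mono ?_ hy2
      rintro _ ⟨h, rfl⟩
      exact ⟨ψ h, hψrange h, rfl⟩
    rwa [hclosed.closure_eq] at h4
  exact ⟨LinearIsometryEquiv.ofSurjective Fi hsurj⟩
end
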